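/- arXiv:1812.07265 — 8 statements merged into one kernel-verified Lean document; each statement's English description precedes it below -/
import Mathlib

section
/- Let X and X' be n×n positive semidefinite real matrices with ‖X − X'‖_F ≤ ε. Then the matrix square roots satisfy ‖√X − √X'‖_F ≤ √(n·ε). -/
open Matrix

/-- Frobenius norm of a real matrix. -/
noncomputable def frobNorm {n : ℕ} (A : Matrix (Fin n) (Fin n) ℝ) : ℝ :=
  Real.sqrt (∑ i, ∑ j, (A i j) ^ 2)

/-- The positive semidefinite square root of a positive semidefinite matrix (removed from
Mathlib; restored with its old definition). -/
noncomputable def Matrix.PosSemidef.sqrt {n : Type*} [Fintype n] [DecidableEq n]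
    {A : Matrix n n ℝ} (hA : A.PosSemidef) : Matrix n n ℝ :=
  (hA.1.eigenvectorUnitary : Matrix n n ℝ) * Matrix.diagonal ((↑) ∘ Real.sqrt ∘ hA.1.eigenvalues) *
    (star hA.1.eigenvectorUnitary : Matrix n n ℝ)

lemma Matrix.PosSemidef.posSemidef_sqrt {n : Type*} [Fintype n] [DecidableEq n]
    {A : Matrix n n ℝ} (hA : A.PosSemidef) : hA.sqrt.PosSemidef := by
  unfold Matrix.PosSemidef.sqrt
  have hd : (Matrix.diagonal ((↑) ∘ Real.sqrt ∘ hA.1.eigenvalues) : Matrix n n ℝ).PosSemidef := by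
    rw [Matrix.posSemidef_diagonal_iff]
    intro i
    simp [Real.sqrt_nonneg]
  simpa [Matrix.star_eq_conjTranspose] using
    hd.mul_mul_conjTranspose_same (hA.1.eigenvectorUnitary : Matrix n n ℝ)

lemma Matrix.PosSemidef.sqrt_mul_self {n : Type*} [Fintype n] [DecidableEq n]
    {A : Matrix n n ℝ} (hA : A.PosSemidef) : hA.sqrt * hA.sqrt = A := by
  unfold Matrix.PosSemidef.sqrt
  have hsUU : (star hA.1.eigenvectorUnitary : Matrix n n ℝ) * hA.1.eigenvectorUnitary = 1 :=
    Unitary.coe_star_mul_self _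
  have hDD : Matrix.diagonal ((↑) ∘ Real.sqrt ∘ hA.1.eigenvalues) *
      Matrix.diagonal ((↑) ∘ Real.sqrt ∘ hA.1.eigenvalues) =
      (Matrix.diagonal (RCLike.ofReal ∘ hA.1.eigenvalues) : Matrix n n ℝ) := by
    rw [Matrix.diagonal_mul_diagonal]
    congr 1
    funext i
    simp [Real.mul_self_sqrt (hA.eigenvalues_nonneg i)]
  have hspec := hA.1.spectral_theorem
  rw [Unitary.conjStarAlgAut_apply] at hspec
  conv_rhs => rw [hspec]
  calc _ = (hA.1.eigenvectorUnitary : Matrix n n ℝ) *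
        Matrix.diagonal ((↑) ∘ Real.sqrt ∘ hA.1.eigenvalues) *
        ((star hA.1.eigenvectorUnitary : Matrix n n ℝ) * (hA.1.eigenvectorUnitary : Matrix n n ℝ)) *
        (Matrix.diagonal ((↑) ∘ Real.sqrt ∘ hA.1.eigenvalues) *
        (star hA.1.eigenvectorUnitary : Matrix n n ℝ)) := by noncomm_ring
    _ = _ := by rw [hsUU, Matrix.mul_one, Matrix.mul_assoc, ← Matrix.mul_assoc _ _ (star _ : Matrix n n ℝ), hDD, Matrix.mul_assoc]

lemma frobNorm_nonneg {n : ℕ} (A : Matrix (Fin n) (Fin n) ℝ) : 0 ≤ frobNorm A :=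
  Real.sqrt_nonneg _

/-- Cauchy–Schwarz style bound: for a unit vector `v`, `|vᵀ M v| ≤ ‖M‖_F`. -/
lemma abs_dot_le_frob {n : ℕ} (M : Matrix (Fin n) (Fin n) ℝ) (v : Fin n → ℝ)
    (hv : ∑ i, v i ^ 2 = 1) :
    |v ⬝ᵥ (M *ᵥ v)| ≤ frobNorm M := by
  have h1 : (v ⬝ᵥ (M *ᵥ v)) ^ 2 ≤ ∑ i, (M *ᵥ v) i ^ 2 := by
    calc (v ⬝ᵥ (M *ᵥ v)) ^ 2 ≤ (∑ i, v i ^ 2) * ∑ i, (M *ᵥ v) i ^ 2 :=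
          Finset.sum_mul_sq_le_sq_mul_sq _ _ _
      _ = ∑ i, (M *ᵥ v) i ^ 2 := by rw [hv, one_mul]
  have h2 : ∀ i, (M *ᵥ v) i ^ 2 ≤ ∑ j, (M i j) ^ 2 := by
    intro i
    calc (M *ᵥ v) i ^ 2 = (∑ j, M i j * v j) ^ 2 := rfl
      _ ≤ (∑ j, (M i j) ^ 2) * ∑ j, v j ^ 2 := Finset.sum_mul_sq_le_sq_mul_sq _ _ _
      _ = ∑ j, (M i j) ^ 2 := by rw [hv, mul_one]
  have h3 : (v ⬝ᵥ (M *ᵥ v)) ^ 2 ≤ ∑ i, ∑ j, (M i j) ^ 2 :=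
    h1.trans (Finset.sum_le_sum fun i _ => h2 i)
  calc |v ⬝ᵥ (M *ᵥ v)| = Real.sqrt ((v ⬝ᵥ (M *ᵥ v)) ^ 2) := (Real.sqrt_sq_eq_abs _).symm
    _ ≤ frobNorm M := Real.sqrt_le_sqrt h3

/-- If `X, X'` are `n × n` positive semidefinite real matrices with
`‖X - X'‖_F ≤ ε`, then `‖√X - √X'‖_F ≤ √(n·ε)`. -/
theorem sqrt_matrices_close {n : ℕ} (X X' : Matrix (Fin n) (Fin n) ℝ) (ε : ℝ)
    (hX : X.PosSemidef) (hX' : X'.PosSemidef)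
    (hXX' : frobNorm (X - X') ≤ ε) :
    frobNorm (hX.sqrt - hX'.sqrt) ≤ Real.sqrt (n * ε) := by
  set a := hX.sqrt with ha
  set b := hX'.sqrt with hb
  set C := a - b with hCdef
  set S := a + b with hSdef
  have hC : C.IsHermitian := (hX.posSemidef_sqrt.1).sub (hX'.posSemidef_sqrt.1)
  -- eigen data
  set lam := hC.eigenvalues with hlam
  set v : Fin n → Fin n → ℝ := fun j => ⇑(hC.eigenvectorBasis j) with hv
  have hunit : ∀ j, ∑ i, v j i ^ 2 = 1 := by
    intro j
    have h := hC.eigenvectorBasis.orthonormal.1 j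
    have h2 := EuclideanSpace.norm_eq (hC.eigenvectorBasis j)
    rw [h] at h2
    have h3 : (1:ℝ) = ∑ i, v j i ^ 2 := by
      have := congrArg (· ^ 2) h2
      simpa [Real.sq_sqrt (Finset.sum_nonneg fun i _ => sq_nonneg _), sq_abs] using this
    exact h3.symm
  have heig : ∀ j, C *ᵥ v j = lam j • v j := fun j => hC.mulVec_eigenvectorBasis j
  -- each eigenvalue squared is at most ε
  have hsymmC : Cᵀ = C := hC
  have hkey : ∀ j, lam j ^ 2 ≤ ε := by
    intro j
    -- identity: C*S + S*C = 2 (X - X')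
    have hid : C * S + S * C = (X - X') + (X - X') := by
      have h1 : C * S + S * C = a * a + a * a - (b * b + b * b) := by
        simp only [hCdef, hSdef]; noncomm_ring
      rw [h1, hX.sqrt_mul_self, hX'.sqrt_mul_self]
      abel
    -- dot products
    have hdotC : v j ⬝ᵥ (C *ᵥ v j) = lam j := by
      rw [heig j, dotProduct_smul]
      have : v j ⬝ᵥ v j = 1 := by simpa [dotProduct, sq] using hunit j
      simp [this]
    have hvec : v j ᵥ* C = lam j • v j := by
      rw [← hsymmC, vecMul_transpose, heig j]
    have hvSv : v j ⬝ᵥ ((C * S) *ᵥ v j) = lam j * (v j ⬝ᵥ (S *ᵥ v j)) := by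
      rw [← mulVec_mulVec, Matrix.dotProduct_mulVec, hvec, smul_dotProduct, smul_eq_mul]
    have hvSv2 : v j ⬝ᵥ ((S * C) *ᵥ v j) = lam j * (v j ⬝ᵥ (S *ᵥ v j)) := by
      rw [← mulVec_mulVec, heig j, mulVec_smul, dotProduct_smul]
      rfl
    have hsum : lam j * (v j ⬝ᵥ (S *ᵥ v j)) = v j ⬝ᵥ ((X - X') *ᵥ v j) := by
      have := congrArg (fun M => v j ⬝ᵥ (M *ᵥ v j)) hid
      simp only [add_mulVec, dotProduct_add] at this
      rw [hvSv, hvSv2] at this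
      linarith
    -- S ∓ C are PSD
    have hSC1 : 0 ≤ v j ⬝ᵥ ((S - C) *ᵥ v j) := by
      have : S - C = b + b := by rw [hSdef, hCdef]; abel
      rw [this]
      have hb2 := hX'.posSemidef_sqrt
      have h := (hb2.add hb2).dotProduct_mulVec_nonneg (v j)
      simpa using h
    have hSC2 : 0 ≤ v j ⬝ᵥ ((S + C) *ᵥ v j) := by
      have : S + C = a + a := by rw [hSdef, hCdef]; abel
      rw [this]
      have ha2 := hX.posSemidef_sqrt
      have h := (ha2.add ha2).dotProduct_mulVec_nonneg (v j)
      simpa using h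
    have habs : |lam j| ≤ v j ⬝ᵥ (S *ᵥ v j) := by
      rw [abs_le]
      constructor
      · have := hSC2
        simp only [add_mulVec, dotProduct_add, hdotC] at this
        linarith
      · have := hSC1
        simp only [sub_mulVec, dotProduct_sub, hdotC] at this
        linarith
    have hCS : |v j ⬝ᵥ ((X - X') *ᵥ v j)| ≤ ε :=
      (abs_dot_le_frob _ _ (hunit j)).trans hXX'
    calc lam j ^ 2 = |lam j| * |lam j| := by rw [← abs_mul, abs_mul_self, sq]
      _ ≤ |lam j| * (v j ⬝ᵥ (S *ᵥ v j)) := by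
          exact mul_le_mul_of_nonneg_left habs (abs_nonneg _)
      _ ≤ |lam j * (v j ⬝ᵥ (S *ᵥ v j))| := by
          rw [abs_mul]
          exact mul_le_mul_of_nonneg_left (le_abs_self _) (abs_nonneg _)
      _ = |v j ⬝ᵥ ((X - X') *ᵥ v j)| := by rw [hsum]
      _ ≤ ε := hCS
  -- Frobenius norm squared equals sum of eigenvalue squares
  have hfrob : ∑ i, ∑ j, C i j ^ 2 = ∑ j, lam j ^ 2 := by
    have htr : ∑ i, ∑ j, C i j ^ 2 = (C * C).trace := by
      rw [Matrix.trace]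
      simp only [Matrix.diag_apply, Matrix.mul_apply]
      refine Finset.sum_congr rfl fun i _ => Finset.sum_congr rfl fun j _ => ?_
      have hji : C j i = C i j := by
        have h := congrFun (congrFun hsymmC i) j
        simpa [Matrix.transpose_apply] using h
      rw [sq, hji]
    set U := (hC.eigenvectorUnitary : Matrix (Fin n) (Fin n) ℝ) with hU
    set D := Matrix.diagonal (RCLike.ofReal ∘ lam : Fin n → ℝ) with hD
    have hspec : C = U * D * star U := hC.spectral_theorem
    have hsUU : star U * U = 1 := Unitary.coe_star_mul_self _
    have h1 : C * C = U * (D * D) * star U := by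
      rw [hspec]
      calc (U*D*star U) * (U*D*star U) = U*D*(star U * U)*(D*star U) := by
            noncomm_ring
        _ = U*(D*D)*star U := by rw [hsUU]; noncomm_ring
    have h2 : (C * C).trace = (D * D).trace := by
      rw [h1, Matrix.trace_mul_cycle, ← Matrix.mul_assoc, hsUU, Matrix.one_mul]
    have h3 : (D * D).trace = ∑ j, lam j ^ 2 := by
      rw [hD, Matrix.diagonal_mul_diagonal, Matrix.trace_diagonal]
      simp [sq]
    rw [htr, h2, h3]
  have : frobNorm C = Real.sqrt (∑ j, lam j ^ 2) := by rw [frobNorm, hfrob]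
  rw [this]
  apply Real.sqrt_le_sqrt
  calc ∑ j, lam j ^ 2 ≤ ∑ _j : Fin n, ε := Finset.sum_le_sum fun j _ => hkey j
    _ = n * ε := by simp [mul_comm]
end

section
/- Let X, X' be n×n positive semidefinite matrices over ℂ with ‖X − X'‖_F ≤ ε. If V and V' are n×n matrices with X = V V† and X' = V' (V')†, then there exists a unitary matrix U ∈ ℂ^{n×n} such that ‖V U − V'‖_F ≤ √(n·ε). In particular, the rows (Gram decomposition vectors) of V U and V' are pairwise within √(n·ε) in 2-norm. -/
set_option maxHeartbeats 1000000
open scoped InnerProductSpace ComplexInnerProductSpace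


open scoped Matrix ComplexOrder
/-- Frobenius norm of a complex matrix. -/
noncomputable def frobNormC {n : ℕ} (A : Matrix (Fin n) (Fin n) ℂ) : ℝ :=
  Real.sqrt (∑ i, ∑ j, ‖A i j‖ ^ 2)

lemma exists_unitary_of_gram {n : ℕ} (A B : Matrix (Fin n) (Fin n) ℂ)
    (h : A * Aᴴ = B * Bᴴ) : ∃ U : Matrix (Fin n) (Fin n) ℂ, U * Uᴴ = 1 ∧ A * U = B := by
  classical
  set f : EuclideanSpace ℂ (Fin n) →ₗ[ℂ] EuclideanSpace ℂ (Fin n) := Matrix.toEuclideanLin Aᴴ with hf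
  set g : EuclideanSpace ℂ (Fin n) →ₗ[ℂ] EuclideanSpace ℂ (Fin n) := Matrix.toEuclideanLin Bᴴ with hg
  have hinner : ∀ x : EuclideanSpace ℂ (Fin n), ⟪f x, f x⟫_ℂ = ⟪g x, g x⟫_ℂ := by
    intro x
    have key : ∀ M : Matrix (Fin n) (Fin n) ℂ,
        ⟪Matrix.toEuclideanLin Mᴴ x, Matrix.toEuclideanLin Mᴴ x⟫_ℂ
          = dotProduct (star (WithLp.equiv 2 _ x)) ((M * Mᴴ) *ᵥ (WithLp.equiv 2 _ x)) := by
      intro M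
      rw [EuclideanSpace.inner_eq_star_dotProduct, dotProduct_comm]
      simp only [Matrix.ofLp_toEuclideanLin_apply]
      rw [Matrix.star_mulVec, ← Matrix.mulVec_mulVec, Matrix.dotProduct_mulVec,
        Matrix.conjTranspose_conjTranspose]
      rw [Matrix.dotProduct_mulVec, Matrix.vecMul_vecMul, Matrix.dotProduct_mulVec, Matrix.vecMul_vecMul]
      rfl
    rw [hf, hg, key A, key B, h]
  have hnorm : ∀ x, ‖f x‖ = ‖g x‖ := by
    intro x
    rw [norm_eq_sqrt_re_inner (𝕜 := ℂ), norm_eq_sqrt_re_inner (𝕜 := ℂ), hinner x]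
  have hker : LinearMap.ker f ≤ LinearMap.ker g := by
    intro x hx
    rw [LinearMap.mem_ker] at hx ⊢
    have : ‖g x‖ = 0 := by rw [← hnorm, hx, norm_zero]
    exact norm_eq_zero.mp this
  let ψ : (_ ⧸ LinearMap.ker f) →ₗ[ℂ] EuclideanSpace ℂ (Fin n) := (LinearMap.ker f).liftQ g hker
  let L0 : LinearMap.range f →ₗ[ℂ] EuclideanSpace ℂ (Fin n) :=
    ψ.comp f.quotKerEquivRange.symm.toLinearMap
  have hL0 : ∀ (x : EuclideanSpace ℂ (Fin n)) (hy : f x ∈ LinearMap.range f),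
      L0 ⟨f x, hy⟩ = g x := by
    intro x hy
    simp only [L0, LinearMap.coe_comp, LinearEquiv.coe_coe, Function.comp_apply,
      f.quotKerEquivRange_symm_apply_image x hy]
    exact Submodule.liftQ_apply _ g x
  have hL0norm : ∀ y : LinearMap.range f, ‖L0 y‖ = ‖y‖ := by
    rintro ⟨y, hy⟩
    obtain ⟨x, rfl⟩ := hy
    rw [hL0 x ⟨x, rfl⟩]
    exact ((hnorm x).symm).trans rfl
  let L : LinearMap.range f →ₗᵢ[ℂ] EuclideanSpace ℂ (Fin n) := ⟨L0, hL0norm⟩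
  let M := L.extend
  have hM : ∀ x, M (f x) = g x := by
    intro x
    have h1 : f x ∈ LinearMap.range f := ⟨x, rfl⟩
    have := L.extend_apply ⟨f x, h1⟩
    rw [show ((⟨f x, h1⟩ : LinearMap.range f) : EuclideanSpace ℂ (Fin n)) = f x from rfl] at this
    rw [this]
    exact hL0 x h1
  let U0 : Matrix (Fin n) (Fin n) ℂ := Matrix.toEuclideanLin.symm M.toLinearMap
  have hU0 : Matrix.toEuclideanLin U0 = M.toLinearMap := Matrix.toEuclideanLin.apply_symm_apply _
  have hmul : ∀ P Q : Matrix (Fin n) (Fin n) ℂ,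
      Matrix.toEuclideanLin (P * Q) = (Matrix.toEuclideanLin P) ∘ₗ (Matrix.toEuclideanLin Q) := by
    intro P Q
    rw [Matrix.toEuclideanLin_eq_toLin]
    exact Matrix.toLin_mul _ _ _ P Q
  have hU0A : U0 * Aᴴ = Bᴴ := by
    apply Matrix.toEuclideanLin.injective
    rw [hmul]
    ext x : 1
    show Matrix.toEuclideanLin U0 (f x) = g x
    rw [hU0]
    exact hM x
  have hU0unit : U0ᴴ * U0 = 1 := by
    ext i j
    have hinner := M.inner_map_map (EuclideanSpace.single i (1:ℂ)) (EuclideanSpace.single j (1:ℂ))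
    have hMi : ∀ k : Fin n, M (EuclideanSpace.single k (1:ℂ))
        = Matrix.toEuclideanLin U0 (EuclideanSpace.single k 1) := by
      intro k; rw [hU0]; rfl
    rw [hMi i, hMi j] at hinner
    rw [EuclideanSpace.inner_eq_star_dotProduct, dotProduct_comm] at hinner
    simp only [Matrix.ofLp_toEuclideanLin_apply] at hinner
    rw [EuclideanSpace.inner_single_left, EuclideanSpace.single_apply] at hinner
    have hsingle : ∀ k : Fin n, WithLp.ofLp (EuclideanSpace.single k (1:ℂ))
        = Pi.single k 1 := fun k => by simp
    rw [hsingle i, hsingle j] at hinner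
    simp only [Matrix.mulVec_single, mul_one, MulOpposite.op_one, one_smul] at hinner
    have : (U0ᴴ * U0) i j = dotProduct (star fun k => U0 k i) (fun k => U0 k j) := by
      simp [Matrix.mul_apply, Matrix.conjTranspose_apply, dotProduct]
    rw [this]; erw [hinner]; rw [Matrix.one_apply]
    simp [eq_comm]
  refine ⟨U0ᴴ, ?_, ?_⟩
  · rw [Matrix.conjTranspose_conjTranspose]
    exact hU0unit
  · have := congrArg Matrix.conjTranspose hU0A
    rwa [Matrix.conjTranspose_mul, Matrix.conjTranspose_conjTranspose,
      Matrix.conjTranspose_conjTranspose] at this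

open scoped Matrix ComplexOrder InnerProductSpace ComplexInnerProductSpace
open scoped MatrixOrder

lemma frobSq_eq_trace {n : ℕ} (M : Matrix (Fin n) (Fin n) ℂ) :
    ((∑ i, ∑ j, ‖M i j‖ ^ 2 : ℝ) : ℂ) = (M * Mᴴ).trace := by
  rw [Matrix.trace]
  push_cast
  apply Finset.sum_congr rfl
  intro i _
  rw [Matrix.diag, Matrix.mul_apply]
  apply Finset.sum_congr rfl
  intro j _
  rw [Matrix.conjTranspose_apply, show star (M i j) = (starRingEnd ℂ) (M i j) from rfl,
    Complex.mul_conj, Complex.normSq_eq_norm_sq]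
  norm_cast

lemma frobSq_mul_unitary {n : ℕ} (M Q : Matrix (Fin n) (Fin n) ℂ) (hQ : Q * Qᴴ = 1) :
    ∑ i, ∑ j, ‖(M * Q) i j‖ ^ 2 = ∑ i, ∑ j, ‖M i j‖ ^ 2 := by
  have := frobSq_eq_trace (M * Q)
  rw [Matrix.conjTranspose_mul, show M * Q * (Qᴴ * Mᴴ) = M * (Q * Qᴴ) * Mᴴ by
    noncomm_ring, hQ, mul_one, ← frobSq_eq_trace M] at this
  exact_mod_cast this

lemma frobSq_hermitian_eq_sum_eig {n : ℕ} (D : Matrix (Fin n) (Fin n) ℂ) (hD : D.IsHermitian) :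
    ∑ i, ∑ j, ‖D i j‖ ^ 2 = ∑ i, (hD.eigenvalues i) ^ 2 := by
  have h1 := frobSq_eq_trace D
  rw [show Dᴴ = D from hD] at h1
  set P : Matrix (Fin n) (Fin n) ℂ := ↑(hD.eigenvectorUnitary) with hPdef
  have hP : star P * P = 1 := Unitary.coe_star_mul_self hD.eigenvectorUnitary
  set d : Matrix (Fin n) (Fin n) ℂ := Matrix.diagonal (RCLike.ofReal ∘ hD.eigenvalues) with hddef
  have h2 : (D * D).trace = (d * d).trace := by
    conv_lhs => rw [hD.spectral_theorem, Unitary.conjStarAlgAut_apply]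
    rw [show P * d * star P * (P * d * star P) = P * (d * (star P * P) * d) * star P by
      noncomm_ring, hP, mul_one, Matrix.trace_mul_cycle, ← mul_assoc, hP, one_mul]
  have h3 : (d * d).trace = ((∑ i, (hD.eigenvalues i) ^ 2 : ℝ) : ℂ) := by
    rw [hddef, Matrix.diagonal_mul_diagonal, Matrix.trace_diagonal]
    push_cast
    apply Finset.sum_congr rfl
    intro i _
    simp [pow_two]
  have := h1.trans (h2.trans h3)
  exact_mod_cast this

lemma abs_dot_le_frob_s3 {n : ℕ} (M : Matrix (Fin n) (Fin n) ℂ) (w : Fin n → ℂ)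
    (hw : ∑ j, ‖w j‖ ^ 2 = 1) :
    ‖dotProduct (star w) (M *ᵥ w)‖ ≤ Real.sqrt (∑ i, ∑ j, ‖M i j‖ ^ 2) := by
  have hnv : ‖(WithLp.equiv 2 (Fin n → ℂ)).symm w‖ = 1 := by
    rw [EuclideanSpace.norm_eq]
    simp only [WithLp.equiv_symm_apply, PiLp.toLp_apply]
    rw [hw]
    exact Real.sqrt_one
  have hrow : ∀ i, ‖(M *ᵥ w) i‖ ^ 2 ≤ ∑ j, ‖M i j‖ ^ 2 := by
    intro i
    have h1 : (M *ᵥ w) i = ⟪(WithLp.equiv 2 (Fin n → ℂ)).symm (star (M i)),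
        (WithLp.equiv 2 (Fin n → ℂ)).symm w⟫_ℂ := by
      rw [EuclideanSpace.inner_toLp_toLp, dotProduct_comm]
      simp [Matrix.mulVec]
    have h2 := norm_inner_le_norm (𝕜 := ℂ) ((WithLp.equiv 2 (Fin n → ℂ)).symm (star (M i)))
        ((WithLp.equiv 2 (Fin n → ℂ)).symm w)
    rw [← h1, hnv, mul_one, EuclideanSpace.norm_eq] at h2
    simp only [WithLp.equiv_symm_apply, PiLp.toLp_apply, Pi.star_apply, norm_star] at h2
    calc ‖(M *ᵥ w) i‖ ^ 2
        ≤ (Real.sqrt (∑ j, ‖M i j‖ ^ 2)) ^ 2 := pow_le_pow_left₀ (norm_nonneg _) h2 2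
      _ = ∑ j, ‖M i j‖ ^ 2 := Real.sq_sqrt (by positivity)
  have hc : ‖dotProduct (star w) (M *ᵥ w)‖
      ≤ ‖(WithLp.equiv 2 (Fin n → ℂ)).symm (M *ᵥ w)‖ := by
    have h1 : dotProduct (star w) (M *ᵥ w) = ⟪(WithLp.equiv 2 (Fin n → ℂ)).symm w,
        (WithLp.equiv 2 (Fin n → ℂ)).symm (M *ᵥ w)⟫_ℂ :=
      by rw [EuclideanSpace.inner_toLp_toLp,
        dotProduct_comm]; simp
    rw [h1]
    calc ‖⟪(WithLp.equiv 2 (Fin n → ℂ)).symm w, (WithLp.equiv 2 (Fin n → ℂ)).symm (M *ᵥ w)⟫_ℂ‖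
        ≤ ‖(WithLp.equiv 2 (Fin n → ℂ)).symm w‖ * ‖(WithLp.equiv 2 (Fin n → ℂ)).symm (M *ᵥ w)‖ :=
          norm_inner_le_norm _ _
      _ = ‖(WithLp.equiv 2 (Fin n → ℂ)).symm (M *ᵥ w)‖ := by rw [hnv, one_mul]
  refine hc.trans ?_
  rw [EuclideanSpace.norm_eq]
  apply Real.sqrt_le_sqrt
  exact Finset.sum_le_sum fun i _ => hrow i

set_option maxHeartbeats 1000000 in
lemma eig_sq_le_frob {n : ℕ} {X X' : Matrix (Fin n) (Fin n) ℂ}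
    (hX : X.PosSemidef) (hX' : X'.PosSemidef)
    (hD : (CFC.sqrt X - CFC.sqrt X').IsHermitian) (i : Fin n) :
    (hD.eigenvalues i) ^ 2 ≤ Real.sqrt (∑ k, ∑ j, ‖(X - X') k j‖ ^ 2) := by
  classical
  set S := CFC.sqrt X with hSdef
  set S' := CFC.sqrt X' with hS'def
  set D := S - S' with hDdef
  set μ : ℝ := hD.eigenvalues i with hμdef
  set w : Fin n → ℂ := ⇑(hD.eigenvectorBasis i) with hwdef
  have hmv : D *ᵥ w = μ • w := hD.mulVec_eigenvectorBasis i
  have hmv' : D *ᵥ w = (μ : ℂ) • w := by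
    rw [hmv]; funext j
    simp [Pi.smul_apply, Complex.real_smul]
  have hvnorm : ‖hD.eigenvectorBasis i‖ = 1 := hD.eigenvectorBasis.orthonormal.1 i
  have hw1 : ∑ j, ‖w j‖ ^ 2 = 1 := by
    have h0 : (0:ℝ) ≤ ∑ j, ‖w j‖ ^ 2 := by positivity
    have h2 : Real.sqrt (∑ j, ‖w j‖ ^ 2) = 1 := by
      rw [EuclideanSpace.norm_eq] at hvnorm; exact hvnorm
    rw [← Real.sq_sqrt h0, h2]; norm_num
  have hww : dotProduct (star w) w = 1 := by
    have : dotProduct (star w) w = ∑ j, ((‖w j‖ ^ 2 : ℝ) : ℂ) := by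
      apply Finset.sum_congr rfl
      intro j _
      rw [Pi.star_apply, show star (w j) = (starRingEnd ℂ) (w j) from rfl, mul_comm,
        Complex.mul_conj, Complex.normSq_eq_norm_sq]
    rw [this, ← Complex.ofReal_sum, hw1, Complex.ofReal_one]
  set a : ℂ := dotProduct (star w) (S *ᵥ w) with hadef
  set b : ℂ := dotProduct (star w) (S' *ᵥ w) with hbdef
  have ha : 0 ≤ a := (Matrix.nonneg_iff_posSemidef.mp (CFC.sqrt_nonneg X)).dotProduct_mulVec_nonneg w
  have hb : 0 ≤ b := (Matrix.nonneg_iff_posSemidef.mp (CFC.sqrt_nonneg X')).dotProduct_mulVec_nonneg w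
  have ha' : a = (a.re : ℂ) := by
    apply Complex.ext <;> simp [(Complex.nonneg_iff.mp ha).2.symm]
  have hb' : b = (b.re : ℂ) := by
    apply Complex.ext <;> simp [(Complex.nonneg_iff.mp hb).2.symm]
  have hα : 0 ≤ a.re := (Complex.nonneg_iff.mp ha).1
  have hβ : 0 ≤ b.re := (Complex.nonneg_iff.mp hb).1
  have hmu : a - b = (μ : ℂ) := by
    have h1 : dotProduct (star w) (D *ᵥ w) = (μ:ℂ) * dotProduct (star w) w := by
      rw [hmv', dotProduct_smul, smul_eq_mul]
    rw [hDdef, Matrix.sub_mulVec, dotProduct_sub, hww, mul_one] at h1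
    exact h1
  have hμeq : a.re - b.re = μ := by
    have := hmu
    rw [ha', hb'] at this
    exact_mod_cast this
  have hdecomp : X - X' = S * D + D * S' := by
    rw [hDdef, mul_sub, sub_mul, CFC.sqrt_mul_sqrt_self X hX.nonneg, CFC.sqrt_mul_sqrt_self X' hX'.nonneg]
    abel
  have hc : dotProduct (star w) ((X - X') *ᵥ w) = (μ:ℂ) * (a + b) := by
    rw [hdecomp, Matrix.add_mulVec, dotProduct_add]
    have hp1 : dotProduct (star w) ((S * D) *ᵥ w) = (μ:ℂ) * a := by
      rw [← Matrix.mulVec_mulVec, hmv', Matrix.mulVec_smul, dotProduct_smul, smul_eq_mul]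
    have hp2 : dotProduct (star w) ((D * S') *ᵥ w) = (μ:ℂ) * b := by
      rw [← Matrix.mulVec_mulVec, Matrix.dotProduct_mulVec]
      have hstar : star w ᵥ* D = (μ:ℂ) • star w := by
        have h1 : star (D *ᵥ w) = star w ᵥ* Dᴴ := Matrix.star_mulVec D w
        rw [show Dᴴ = D from hD] at h1
        rw [← h1, hmv', star_smul, Complex.star_def, Complex.conj_ofReal]
      rw [hstar, smul_dotProduct, smul_eq_mul]
    rw [hp1, hp2]
    ring
  have habs : ‖dotProduct (star w) ((X - X') *ᵥ w)‖ = |μ| * (a.re + b.re) := by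
    rw [hc, ha', hb']
    rw [show ((a.re : ℂ) + (b.re : ℂ)) = ((a.re + b.re : ℝ) : ℂ) by push_cast; ring,
      show ((μ:ℂ) * ((a.re + b.re : ℝ) : ℂ)) = ((μ * (a.re + b.re) : ℝ) : ℂ) by push_cast; ring,
      Complex.norm_real, Real.norm_eq_abs, abs_mul, abs_of_nonneg (by linarith : (0:ℝ) ≤ a.re + b.re)]
    simp
  have hkey : μ ^ 2 ≤ |μ| * (a.re + b.re) := by
    have h1 : |μ| ≤ a.re + b.re := by
      rw [← hμeq]
      calc |a.re - b.re| ≤ |a.re| + |b.re| := abs_sub _ _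
        _ = a.re + b.re := by rw [abs_of_nonneg hα, abs_of_nonneg hβ]
    calc μ ^ 2 = |μ| * |μ| := by rw [abs_mul_abs_self]; ring
      _ ≤ |μ| * (a.re + b.re) := mul_le_mul_of_nonneg_left h1 (abs_nonneg _)
  calc μ ^ 2 ≤ |μ| * (a.re + b.re) := hkey
    _ = ‖dotProduct (star w) ((X - X') *ᵥ w)‖ := habs.symm
    _ ≤ Real.sqrt (∑ k, ∑ j, ‖(X - X') k j‖ ^ 2) := abs_dot_le_frob_s3 _ w hw1


/-- If `X = V V†` and `X' = W W†` are positive semidefinite with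
`‖X - X'‖_F ≤ ε`, then there is a unitary `U` with `‖V U - W‖_F ≤ √(n·ε)`; in
particular the rows (Gram decomposition vectors) of `V U` and `W` are pairwise
within `√(n·ε)` in 2-norm. -/
theorem gram_decompositions_close {n : ℕ} (X X' V W : Matrix (Fin n) (Fin n) ℂ) (ε : ℝ)
    (hX : X.PosSemidef) (hX' : X'.PosSemidef)
    (hV : X = V * Vᴴ) (hW : X' = W * Wᴴ)
    (hXX' : frobNormC (X - X') ≤ ε) :
    ∃ U : Matrix (Fin n) (Fin n) ℂ, U * Uᴴ = 1 ∧
      frobNormC (V * U - W) ≤ Real.sqrt (n * ε) ∧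
      ∀ i : Fin n, Real.sqrt (∑ j, ‖(V * U) i j - W i j‖ ^ 2) ≤ Real.sqrt (n * ε) := by
  classical
  unfold frobNormC at hXX' ⊢
  set S := CFC.sqrt X with hSdef
  set S' := CFC.sqrt X' with hS'def
  have hSH : Sᴴ = S := (Matrix.nonneg_iff_posSemidef.mp (CFC.sqrt_nonneg X)).1
  have hS'H : S'ᴴ = S' := (Matrix.nonneg_iff_posSemidef.mp (CFC.sqrt_nonneg X')).1
  obtain ⟨U₁, hU₁, hVU₁⟩ := exists_unitary_of_gram V S (by rw [← hV, hSH, CFC.sqrt_mul_sqrt_self X hX.nonneg])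
  obtain ⟨U₂, hU₂, hWU₂⟩ := exists_unitary_of_gram W S' (by rw [← hW, hS'H, CFC.sqrt_mul_sqrt_self X' hX'.nonneg])
  have hU₂' : U₂ᴴ * U₂ = 1 := mul_eq_one_comm.mp hU₂
  have hWeq : S' * U₂ᴴ = W := by rw [← hWU₂, mul_assoc, hU₂, mul_one]
  have hkey : V * (U₁ * U₂ᴴ) - W = (S - S') * U₂ᴴ := by
    rw [← mul_assoc, hVU₁, ← hWeq, Matrix.sub_mul]
  have hDH : (S - S').IsHermitian := ((Matrix.nonneg_iff_posSemidef.mp (CFC.sqrt_nonneg X)).1).sub ((Matrix.nonneg_iff_posSemidef.mp (CFC.sqrt_nonneg X')).1)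
  have hfrob : ∑ i, ∑ j, ‖(V * (U₁ * U₂ᴴ) - W) i j‖ ^ 2 = ∑ i, ∑ j, ‖(S - S') i j‖ ^ 2 := by
    rw [hkey]
    exact frobSq_mul_unitary (S - S') U₂ᴴ
      (by rw [Matrix.conjTranspose_conjTranspose]; exact hU₂')
  have hsum : ∑ i, ∑ j, ‖(V * (U₁ * U₂ᴴ) - W) i j‖ ^ 2 ≤ n * ε := by
    rw [hfrob, frobSq_hermitian_eq_sum_eig _ hDH]
    calc ∑ i, hDH.eigenvalues i ^ 2 ≤ Finset.univ.card • ε :=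
          Finset.sum_le_card_nsmul _ _ ε fun i _ => (eig_sq_le_frob hX hX' hDH i).trans hXX'
      _ = n * ε := by simp [Finset.card_univ, nsmul_eq_mul]
  refine ⟨U₁ * U₂ᴴ, ?_, ?_, ?_⟩
  · rw [Matrix.conjTranspose_mul, Matrix.conjTranspose_conjTranspose,
      show U₁ * U₂ᴴ * (U₂ * U₁ᴴ) = U₁ * (U₂ᴴ * U₂) * U₁ᴴ by noncomm_ring, hU₂', mul_one, hU₁]
  · exact Real.sqrt_le_sqrt hsum
  · intro i
    apply Real.sqrt_le_sqrt
    refine le_trans ?_ hsum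
    have : ∑ j, ‖(V * (U₁ * U₂ᴴ)) i j - W i j‖ ^ 2
        = ∑ j, ‖(V * (U₁ * U₂ᴴ) - W) i j‖ ^ 2 := by
      apply Finset.sum_congr rfl
      intro j _
      rw [Matrix.sub_apply]
    rw [this]
    exact Finset.single_le_sum (f := fun i => ∑ j, ‖(V * (U₁ * U₂ᴴ) - W) i j‖ ^ 2)
      (fun i _ => by positivity) (Finset.mem_univ i)
end

section
/- For any m > n, the (1+n)×(1+n) matrix F with F₀₀ = 1, F_{0i} = F_{i0} = 1/m and F_{ii} = 1/m for 1 ≤ i ≤ n, and all other entries zero, is positive definite. Hence the Lovász theta SDP (with constraints X₀₀ = 1, X_{ii} = X_{0i}, X_{ij} = 0 for i ∼ j in a graph with no loops) is strictly feasible whenever the graph has no edges incident to vertex 0 and no constraint forces off-diagonal entries among {1,…,n} other than zeros; in particular F satisfies X_{ij} = 0 for all i ≠ j in {1,…,n}. -/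
/-- The arrow-shaped strictly feasible matrix for the Lovász theta SDP. -/
noncomputable def arrowMatrix (n : ℕ) (m : ℝ) : Matrix (Fin (n + 1)) (Fin (n + 1)) ℝ :=
  fun i j =>
    if i = 0 ∧ j = 0 then 1
    else if i = 0 ∨ j = 0 then 1 / m
    else if i = j then 1 / m
    else 0

lemma arrow00 (n : ℕ) (m : ℝ) : arrowMatrix n m 0 0 = 1 := by simp [arrowMatrix]

lemma arrow0s (n : ℕ) (m : ℝ) (j : Fin n) : arrowMatrix n m 0 j.succ = 1 / m := by
  simp [arrowMatrix, Fin.succ_ne_zero]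

lemma arrows0 (n : ℕ) (m : ℝ) (i : Fin n) : arrowMatrix n m i.succ 0 = 1 / m := by
  simp [arrowMatrix, Fin.succ_ne_zero]

lemma arrowss (n : ℕ) (m : ℝ) (i j : Fin n) :
    arrowMatrix n m i.succ j.succ = if i = j then 1 / m else 0 := by
  simp [arrowMatrix, Fin.succ_ne_zero, Fin.succ_inj]

lemma arrowQuadForm (n : ℕ) (m : ℝ) (x : Fin (n + 1) → ℝ) :
    dotProduct (star x) ((arrowMatrix n m).mulVec x) =
      x 0 ^ 2 + 2 / m * (x 0 * ∑ i : Fin n, x i.succ)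
        + (∑ i : Fin n, (x i.succ) ^ 2) / m := by
  simp only [dotProduct, Matrix.mulVec, star_trivial, Pi.star_apply,
    Fin.sum_univ_succ, arrow00, arrow0s, arrows0, arrowss, ite_mul, zero_mul,
    Finset.sum_ite_eq, Finset.mem_univ, if_true, one_mul]
  have e1 : ∀ i : Fin n, x i.succ * (1 / m * x 0 + 1 / m * x i.succ)
      = 1 / m * (x 0 * x i.succ) + 1 / m * (x i.succ ^ 2) := fun i => by ring
  simp only [e1, Finset.sum_add_distrib, ← Finset.mul_sum]
  ring

/-- For any real `m > n`, the arrow matrix `F` (with `F₀₀ = 1`,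
`F_{0i} = F_{i0} = F_{ii} = 1/m`, zero elsewhere) is positive definite, and it satisfies
the Lovász theta SDP constraints: `F₀₀ = 1`, `F_{ii} = F_{0i}` for `i ≥ 1`, and
`F_{ij} = 0` for all distinct `i ≠ j` in `{1,…,n}` (hence for any edge set). -/
theorem arrowMatrix_strictly_feasible (n : ℕ) (m : ℝ) (hm : (n : ℝ) < m) :
    (arrowMatrix n m).PosDef ∧
      arrowMatrix n m 0 0 = 1 ∧
      (∀ i : Fin (n + 1), i ≠ 0 → arrowMatrix n m i i = arrowMatrix n m 0 i) ∧
      (∀ i j : Fin (n + 1), i ≠ 0 → j ≠ 0 → i ≠ j → arrowMatrix n m i j = 0) := by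
  have hm0 : 0 < m := lt_of_le_of_lt (Nat.cast_nonneg n) hm
  refine ⟨Matrix.PosDef.of_dotProduct_mulVec_pos ?_ ?_, ?_, ?_, ?_⟩
  · -- Hermitian
    ext i j
    simp only [Matrix.conjTranspose_apply, star_trivial, arrowMatrix]
    by_cases hi : i = 0 <;> by_cases hj : j = 0 <;> by_cases hij : i = j <;>
      simp_all [eq_comm]
  · intro x hx
    set S := ∑ i : Fin n, x i.succ with hSdef
    set Q := ∑ i : Fin n, (x i.succ) ^ 2 with hQdef
    have key := arrowQuadForm n m x
    rw [← hSdef, ← hQdef] at key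
    rw [key]
    have expand : x 0 ^ 2 + 2 / m * (x 0 * S) + Q / m
        = ((m * x 0 + S) ^ 2 + (m * Q - S ^ 2)) / m ^ 2 := by
      field_simp
      ring
    rw [expand]
    apply div_pos _ (by positivity)
    have hCS : S ^ 2 ≤ (n : ℝ) * Q := by
      have h := Finset.sum_mul_sq_le_sq_mul_sq Finset.univ
        (fun _ : Fin n => (1 : ℝ)) (fun i => x i.succ)
      simpa [hSdef, hQdef] using h
    have hQ0 : 0 ≤ Q := Finset.sum_nonneg fun i _ => sq_nonneg _
    rcases eq_or_lt_of_le hQ0 with hQ | hQ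
    · -- Q = 0 : all x i.succ = 0, so S = 0 and x 0 ≠ 0
      have hz : ∀ i : Fin n, x i.succ = 0 := by
        intro i
        have := (Finset.sum_eq_zero_iff_of_nonneg
          (fun j _ => sq_nonneg (x j.succ))).mp hQ.symm i (Finset.mem_univ i)
        exact (pow_eq_zero_iff two_ne_zero).mp this
      have hS : S = 0 := by simp [hSdef, hz]
      have hx0 : x 0 ≠ 0 := by
        intro h0
        apply hx
        funext i
        refine Fin.cases ?_ ?_ i
        · exact h0
        · intro j; exact hz j
      have hmx : m * x 0 ≠ 0 := mul_ne_zero hm0.ne' hx0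
      rw [hS, ← hQ]
      have : 0 < (m * x 0) ^ 2 := by positivity
      nlinarith [this]
    · -- Q > 0
      have hnQ : (n : ℝ) * Q < m * Q := mul_lt_mul_of_pos_right hm hQ
      nlinarith [sq_nonneg (m * x 0 + S)]
  · simp [arrowMatrix]
  · intro i hi
    simp [arrowMatrix, hi]
  · intro i j hi hj hij
    simp [arrowMatrix, hi, hj, hij]
end

section
/- For any odd integer n ≥ 3, let θ = n·cos(π/n)/(1 + cos(π/n)) and let A be the adjacency matrix of C_n. Then the n×n matrix I + ((n − θ)/(2θ))·A − (1/θ)·e eᵀ is positive semidefinite, where e is the all-ones vector. -/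
open Real Matrix

/-- Adjacency matrix of the cycle graph `C_n` (indices mod `n`). -/
def cycleAdj (n : ℕ) : Matrix (Fin n) (Fin n) ℝ :=
  fun i j => if j.val = (i.val + 1) % n ∨ i.val = (j.val + 1) % n then 1 else 0

private lemma succ_mod_eq (n v : ℕ) (hv : v < n) :
    (v + 1) % n = if v + 1 = n then 0 else v + 1 := by
  split_ifs with h
  · simp [h]
  · exact Nat.mod_eq_of_lt (by omega)

/-- Sum of powers of a primitive-ish root of unity. -/
private lemma exp_zpow_sum (n : ℕ) (hn : 0 < n) (m : ℤ) :
    ∑ k : Fin n, Complex.exp (2 * Real.pi * Complex.I / n) ^ (((k : ℕ) : ℤ) * m)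
      = if (n : ℤ) ∣ m then (n : ℂ) else 0 := by
  set ζ : ℂ := Complex.exp (2 * Real.pi * Complex.I / n) with hζ
  have hn0 : (n : ℂ) ≠ 0 := Nat.cast_ne_zero.mpr hn.ne'
  have hζn : ζ ^ (n : ℕ) = 1 := by
    rw [hζ, ← Complex.exp_nat_mul]
    rw [show (n : ℂ) * (2 * Real.pi * Complex.I / n) = 2 * Real.pi * Complex.I by
      field_simp]
    exact Complex.exp_two_pi_mul_I
  have hpow : ∀ k : Fin n, ζ ^ (((k : ℕ) : ℤ) * m) = (ζ ^ m) ^ (k : ℕ) := by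
    intro k
    rw [mul_comm, _root_.zpow_mul, zpow_natCast]
  simp_rw [hpow]
  rw [Fin.sum_univ_eq_sum_range (fun k => (ζ ^ m) ^ k) n]
  by_cases hd : (n : ℤ) ∣ m
  · obtain ⟨t, rfl⟩ := hd
    have h1 : ζ ^ ((n : ℤ) * t) = 1 := by
      rw [_root_.zpow_mul, zpow_natCast, hζn, _root_.one_zpow]
    simp [h1]
  · have h1 : ζ ^ m ≠ 1 := by
      intro h
      apply hd
      rw [hζ, ← Complex.exp_int_mul] at h
      obtain ⟨t, ht⟩ := Complex.exp_eq_one_iff.mp h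
      have hne : (2 * (Real.pi : ℂ) * Complex.I) ≠ 0 := Complex.two_pi_I_ne_zero
      have h2 : (m : ℂ) = (t * n : ℤ) := by
        field_simp at ht
        push_cast
        exact mul_right_cancel₀ hne (by rw [ht]; ring)
      have h3 : m = t * n := by exact_mod_cast h2
      exact ⟨t, h3.trans (mul_comm t n)⟩
    have h2 : (ζ ^ m) ^ n = 1 := by
      rw [← zpow_natCast, ← _root_.zpow_mul, mul_comm, _root_.zpow_mul, zpow_natCast, hζn, _root_.one_zpow]
    rw [geom_sum_eq h1, h2, sub_self, zero_div]
    simp [hd]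

private lemma dvd_iff_fin (n : ℕ) (hn : 0 < n) (a : ℕ) (j l : Fin n) :
    (n : ℤ) ∣ ((a : ℤ) + (j : ℕ) - (l : ℕ)) ↔ l.val = (j.val + a) % n := by
  rw [← Int.modEq_iff_dvd]
  unfold Int.ModEq
  rw [Int.emod_eq_of_lt (by positivity) (by exact_mod_cast l.isLt),
    show ((a : ℤ) + (j : ℕ)) = ((j.val + a : ℕ) : ℤ) by push_cast; ring,
    ← Int.natCast_mod, Nat.cast_inj]

private lemma cos_bound (n : ℕ) (hn : 3 ≤ n) (hodd : Odd n) (k : Fin n) :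
    0 ≤ Real.cos (π / n) + Real.cos (2 * π * k / n) := by
  have hN : (0:ℝ) < n := by positivity
  have hπ := Real.pi_pos
  have hk : (k : ℕ) < n := k.isLt
  have h2k : 2 * (k : ℕ) ≠ n := by
    intro h
    rw [Nat.odd_iff] at hodd
    omega
  have hy : π - π / n ≤ π := by
    have : 0 ≤ π / (n:ℝ) := by positivity
    linarith
  rcases lt_or_gt_of_ne h2k with h | h
  · have hx0 : 0 ≤ 2 * π * k / (n:ℝ) := by positivity
    have hxy : 2 * π * (k:ℕ) / (n:ℝ) ≤ π - π / n := by
      rw [div_le_iff₀ hN, sub_mul, div_mul_cancel₀ _ (ne_of_gt hN)]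
      have h1 : (2 * (k:ℕ) + 1 : ℝ) ≤ n := by exact_mod_cast (by omega : 2 * (k:ℕ) + 1 ≤ n)
      nlinarith
    have := Real.cos_le_cos_of_nonneg_of_le_pi hx0 hy hxy
    rw [Real.cos_pi_sub] at this
    linarith
  · have hc2 : Real.cos (2 * π * k / (n:ℝ)) = Real.cos (2 * π - 2 * π * k / n) :=
      (Real.cos_two_pi_sub _).symm
    rw [hc2]
    have hx0 : 0 ≤ 2 * π - 2 * π * k / (n:ℝ) := by
      rw [sub_nonneg, div_le_iff₀ hN]
      have h1 : ((k:ℕ) : ℝ) ≤ n := le_of_lt (by exact_mod_cast hk)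
      nlinarith
    have hxy : 2 * π - 2 * π * (k:ℕ) / (n:ℝ) ≤ π - π / n := by
      have h2 : π + π / (n:ℝ) ≤ 2 * π * (k:ℕ) / n := by
        rw [le_div_iff₀ hN, add_mul, div_mul_cancel₀ _ (ne_of_gt hN)]
        have h1 : ((n:ℝ) + 1) ≤ 2 * (k:ℕ) := by exact_mod_cast (by omega : n + 1 ≤ 2 * (k:ℕ))
        nlinarith
      linarith
    have := Real.cos_le_cos_of_nonneg_of_le_pi hx0 hy hxy
    rw [Real.cos_pi_sub] at this
    linarith

/-- For odd `n ≥ 3` and `θ = n cos(π/n)/(1+cos(π/n))`, the matrix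
`I + ((n−θ)/(2θ))·A_{C_n} − (1/θ)·e eᵀ` is positive semidefinite. -/
theorem kcbs_schur_complement_psd (n : ℕ) (hn : 3 ≤ n) (hodd : Odd n) :
    letI θ : ℝ := n * Real.cos (π / n) / (1 + Real.cos (π / n))
    Matrix.PosSemidef
      ((1 : Matrix (Fin n) (Fin n) ℝ) + ((n - θ) / (2 * θ)) • cycleAdj n
        - (1 / θ) • Matrix.vecMulVec (fun _ => 1) (fun _ => 1)) := by
  haveI : NeZero n := ⟨by omega⟩
  have hn0 : 0 < n := by omega
  have hN : (0:ℝ) < n := by positivity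
  have hNne : (n:ℝ) ≠ 0 := ne_of_gt hN
  have hπ := Real.pi_pos
  set c : ℝ := Real.cos (π / n) with hcdef
  have hc : 0 < c := by
    apply Real.cos_pos_of_mem_Ioo
    constructor
    · have : 0 < π / (n:ℝ) := by positivity
      linarith
    · have h3 : (3:ℝ) ≤ n := by exact_mod_cast hn
      rw [div_lt_div_iff₀ hN two_pos]
      nlinarith
  have hcne : c ≠ 0 := ne_of_gt hc
  have h1c : (0:ℝ) < 1 + c := by linarith
  have h1cne : (1:ℝ) + c ≠ 0 := ne_of_gt h1c
  set θ : ℝ := n * c / (1 + c) with hθdef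
  have hθ : 0 < θ := by positivity
  have hcoef1 : ((n:ℝ) - θ) / (2 * θ) = 1 / (2 * c) := by
    rw [hθdef]
    field_simp
    ring
  have hcoef2 : 1 / θ = (1 + c) / ((n:ℝ) * c) := by
    rw [hθdef]
    field_simp
  have hval1 : (1 : Fin n).val = 1 := by
    rw [Fin.val_one']
    exact Nat.mod_eq_of_lt (by omega)
  have hsucc : ∀ i j : Fin n, (j.val = (i.val + 1) % n) ↔ j = i + 1 := by
    intro i j
    rw [Fin.ext_iff, Fin.val_add, hval1]
  show Matrix.PosSemidef _
  refine Matrix.PosSemidef.of_dotProduct_mulVec_nonneg ?_ ?_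
  · -- Hermitian
    ext i j
    simp only [Matrix.conjTranspose_apply, Matrix.sub_apply, Matrix.add_apply,
      Matrix.smul_apply, Matrix.one_apply, Matrix.vecMulVec_apply, cycleAdj,
      smul_eq_mul, star_trivial]
    have e1 : (if j = i then (1:ℝ) else 0) = (if i = j then (1:ℝ) else 0) := by
      by_cases h : j = i
      · rw [if_pos h, if_pos h.symm]
      · rw [if_neg h, if_neg (fun hh => h hh.symm)]
    have e2 : (if ((i:ℕ) = ((j:ℕ) + 1) % n ∨ (j:ℕ) = ((i:ℕ) + 1) % n) then (1:ℝ) else 0)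
        = (if ((j:ℕ) = ((i:ℕ) + 1) % n ∨ (i:ℕ) = ((j:ℕ) + 1) % n) then (1:ℝ) else 0) := by
      by_cases h : ((i:ℕ) = ((j:ℕ) + 1) % n ∨ (j:ℕ) = ((i:ℕ) + 1) % n)
      · rw [if_pos h, if_pos (Or.symm h)]
      · rw [if_neg h, if_neg (fun hh => h (Or.symm hh))]
    rw [e1, e2]
  · intro x
    rw [star_trivial]
    set S : ℝ := ∑ i, x i with hSdef
    set P : ℝ := ∑ i, x i * x i with hPdef
    set T : ℝ := ∑ i, x i * x (i + 1) with hTdef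
    -- quadratic form pieces
    have hone : x ⬝ᵥ ((1 : Matrix (Fin n) (Fin n) ℝ) *ᵥ x) = P := by
      simp [dotProduct, hPdef]
    have hJ : x ⬝ᵥ ((Matrix.vecMulVec (fun _ => (1:ℝ)) (fun _ => 1)) *ᵥ x) = S * S := by
      simp [Matrix.vecMulVec_apply, Matrix.mulVec, dotProduct, ← Finset.sum_mul, hSdef]
    have hdisj : ∀ i j : Fin n, ¬(j = i + 1 ∧ i = j + 1) := by
      rintro i j ⟨h1, h2⟩
      subst h1
      have h3 := congrArg Fin.val h2
      rw [Fin.val_add, Fin.val_add, hval1] at h3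
      rw [succ_mod_eq n i.val i.isLt] at h3
      have hi := i.isLt
      split_ifs at h3 with h4
      · rw [succ_mod_eq n 0 (by omega)] at h3
        split_ifs at h3 <;> omega
      · rw [succ_mod_eq n (i.val + 1) (by omega)] at h3
        split_ifs at h3 <;> omega
    have hA : x ⬝ᵥ (cycleAdj n *ᵥ x) = 2 * T := by
      have step1 : x ⬝ᵥ (cycleAdj n *ᵥ x)
          = ∑ i, ∑ j, (if j = i + 1 ∨ i = j + 1 then (1:ℝ) else 0) * (x i * x j) := by
        simp only [dotProduct, Matrix.mulVec, cycleAdj, Finset.mul_sum]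
        refine Finset.sum_congr rfl fun i _ => Finset.sum_congr rfl fun j _ => ?_
        simp only [hsucc]
        ring
      rw [step1]
      have step2 : ∀ i j : Fin n,
          (if j = i + 1 ∨ i = j + 1 then (1:ℝ) else 0) * (x i * x j)
          = (if j = i + 1 then x i * x j else 0) + (if i = j + 1 then x i * x j else 0) := by
        intro i j
        rcases Classical.em (j = i + 1) with h1 | h1
        · have h2 : ¬ i = j + 1 := fun h2 => hdisj i j ⟨h1, h2⟩
          rw [if_pos (Or.inl h1), if_pos h1, if_neg h2]
          ring
        · rcases Classical.em (i = j + 1) with h2 | h2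
          · rw [if_pos (Or.inr h2), if_neg h1, if_pos h2]
            ring
          · rw [if_neg (fun hh => hh.elim h1 h2), if_neg h1, if_neg h2]
            ring
      simp_rw [step2, Finset.sum_add_distrib]
      have p1 : ∑ i : Fin n, ∑ j : Fin n, (if j = i + 1 then x i * x j else 0)
          = T := by
        rw [hTdef]
        refine Finset.sum_congr rfl fun i _ => ?_
        simp [Finset.sum_ite_eq' Finset.univ (i+1) (fun j => x i * x j)]
      have p2 : ∑ i : Fin n, ∑ j : Fin n, (if i = j + 1 then x i * x j else 0)
          = T := by
        rw [Finset.sum_comm, hTdef]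
        refine Finset.sum_congr rfl fun j _ => ?_
        have : ∀ i : Fin n, (if i = j + 1 then x i * x j else 0)
            = (if i = j + 1 then x (j+1) * x j else 0) := by
          intro i; split_ifs with h <;> simp [h]
        simp_rw [this]
        rw [Finset.sum_ite_eq' Finset.univ (j+1) (fun _ => x (j+1) * x j)]
        simp [mul_comm]
      rw [p1, p2]
      ring
    have hQ : x ⬝ᵥ (((1 : Matrix (Fin n) (Fin n) ℝ) + ((n - θ) / (2 * θ)) • cycleAdj n
        - (1 / θ) • Matrix.vecMulVec (fun _ => 1) (fun _ => 1)) *ᵥ x)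
        = P + (1/(2*c)) * (2*T) - ((1+c)/((n:ℝ)*c)) * (S*S) := by
      rw [Matrix.sub_mulVec, Matrix.add_mulVec, Matrix.smul_mulVec,
        Matrix.smul_mulVec, dotProduct_sub, dotProduct_add,
        dotProduct_smul, dotProduct_smul, smul_eq_mul, smul_eq_mul,
        hone, hJ, hA, hcoef1, hcoef2]
    rw [hQ]
    -- Fourier analysis
    set ζ : ℂ := Complex.exp (2 * π * Complex.I / n) with hζdef
    have hζ0 : ζ ≠ 0 := Complex.exp_ne_zero _
    set F : Fin n → ℂ := fun k => ∑ j, (x j : ℂ) * ζ ^ (((k:ℕ):ℤ) * ((j:ℕ):ℤ)) with hFdef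
    have hconj : ∀ k : Fin n, (starRingEnd ℂ) (F k)
        = ∑ l, (x l : ℂ) * ζ ^ (-(((k:ℕ):ℤ) * ((l:ℕ):ℤ))) := by
      intro k
      rw [hFdef]
      rw [map_sum]
      refine Finset.sum_congr rfl fun l _ => ?_
      rw [_root_.map_mul, Complex.conj_ofReal, map_zpow₀]
      congr 1
      rw [hζdef, ← Complex.exp_conj]
      rw [show (starRingEnd ℂ) (2 * (π:ℂ) * Complex.I / n) = -(2 * (π:ℂ) * Complex.I / n) by
        simp [map_div₀, Complex.conj_I, map_ofNat]; ring]
      rw [Complex.exp_neg, _root_.inv_zpow, ← _root_.zpow_neg]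
    have hFF : ∀ a : ℤ, ∑ k : Fin n, ζ ^ (((k:ℕ):ℤ) * a) * (F k * (starRingEnd ℂ) (F k))
        = ∑ j : Fin n, ∑ l : Fin n, ((x j : ℂ) * (x l : ℂ))
            * (if (n:ℤ) ∣ (a + ((j:ℕ):ℤ) - ((l:ℕ):ℤ)) then (n:ℂ) else 0) := by
      intro a
      have step1 : ∀ k : Fin n, ζ ^ (((k:ℕ):ℤ) * a) * (F k * (starRingEnd ℂ) (F k))
          = ∑ j : Fin n, ∑ l : Fin n, ((x j : ℂ) * (x l : ℂ))
              * ζ ^ (((k:ℕ):ℤ) * (a + ((j:ℕ):ℤ) - ((l:ℕ):ℤ))) := by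
        intro k
        rw [hconj k, hFdef]
        rw [Finset.sum_mul_sum, Finset.mul_sum]
        refine Finset.sum_congr rfl fun j _ => ?_
        rw [Finset.mul_sum]
        refine Finset.sum_congr rfl fun l _ => ?_
        rw [show (((k:ℕ):ℤ) * (a + ((j:ℕ):ℤ) - ((l:ℕ):ℤ)))
            = ((k:ℕ):ℤ) * a + (((k:ℕ):ℤ) * ((j:ℕ):ℤ) + -(((k:ℕ):ℤ) * ((l:ℕ):ℤ))) by ring,
          zpow_add₀ hζ0, zpow_add₀ hζ0]
        ring
      simp_rw [step1]
      rw [Finset.sum_comm]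
      refine Finset.sum_congr rfl fun j _ => ?_
      rw [Finset.sum_comm]
      refine Finset.sum_congr rfl fun l _ => ?_
      rw [← Finset.mul_sum, hζdef, exp_zpow_sum n hn0]
    have hE0 : ∑ k : Fin n, (F k * (starRingEnd ℂ) (F k)) = n * ∑ j, (x j : ℂ) * (x j) := by
      have h := hFF 0
      simp only [mul_zero, zpow_zero, one_mul] at h
      rw [h]
      have hc0 : ∀ j l : Fin n, ((n:ℤ) ∣ ((0:ℤ) + ((j:ℕ):ℤ) - ((l:ℕ):ℤ))) ↔ l = j := by
        intro j l
        rw [show ((0:ℤ) + ((j:ℕ):ℤ) - ((l:ℕ):ℤ)) = (((0:ℕ):ℤ) + ((j:ℕ):ℤ) - ((l:ℕ):ℤ)) by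
          push_cast; ring]
        rw [dvd_iff_fin n hn0 0 j l, Nat.add_zero, Nat.mod_eq_of_lt j.isLt, ← Fin.ext_iff]
      simp_rw [hc0]
      rw [Finset.mul_sum]
      refine Finset.sum_congr rfl fun j _ => ?_
      simp_rw [mul_ite, mul_zero]
      rw [Finset.sum_ite_eq' Finset.univ j (fun l => (x j : ℂ) * (x l : ℂ) * n)]
      simp
      ring
    have hc1 : ∀ j l : Fin n, ((n:ℤ) ∣ ((1:ℤ) + ((j:ℕ):ℤ) - ((l:ℕ):ℤ))) ↔ l = j + 1 := by
      intro j l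
      rw [show ((1:ℤ) + ((j:ℕ):ℤ) - ((l:ℕ):ℤ)) = (((1:ℕ):ℤ) + ((j:ℕ):ℤ) - ((l:ℕ):ℤ)) by
        push_cast; ring]
      rw [dvd_iff_fin n hn0 1 j l, Fin.ext_iff, Fin.val_add, hval1]
    have hE1 : ∑ k : Fin n, ζ ^ (((k:ℕ):ℤ)) * (F k * (starRingEnd ℂ) (F k))
        = n * ∑ j, (x j : ℂ) * (x (j+1)) := by
      have h := hFF 1
      simp only [mul_one] at h
      rw [h]
      simp_rw [hc1]
      rw [Finset.mul_sum]
      refine Finset.sum_congr rfl fun j _ => ?_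
      simp_rw [mul_ite, mul_zero]
      rw [Finset.sum_ite_eq' Finset.univ (j+1) (fun l => (x j : ℂ) * (x l : ℂ) * n)]
      simp
      ring
    have hE2 : ∑ k : Fin n, ζ ^ (-((k:ℕ):ℤ)) * (F k * (starRingEnd ℂ) (F k))
        = n * ∑ j, (x j : ℂ) * (x (j+1)) := by
      have hrw : ∀ k : Fin n, ζ ^ (-((k:ℕ):ℤ)) = ζ ^ (((k:ℕ):ℤ) * (-1)) := fun k => by
        rw [mul_neg_one]
      simp_rw [hrw]
      rw [hFF (-1)]
      have hcm1 : ∀ j l : Fin n, ((n:ℤ) ∣ ((-1:ℤ) + ((j:ℕ):ℤ) - ((l:ℕ):ℤ))) ↔ j = l + 1 := by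
        intro j l
        rw [show ((-1:ℤ) + ((j:ℕ):ℤ) - ((l:ℕ):ℤ)) = -((1:ℤ) + ((l:ℕ):ℤ) - ((j:ℕ):ℤ)) by ring,
          dvd_neg]
        exact hc1 l j
      simp_rw [hcm1]
      rw [Finset.sum_comm, Finset.mul_sum]
      refine Finset.sum_congr rfl fun l _ => ?_
      have : ∀ j : Fin n, ((x j : ℂ) * (x l : ℂ))
            * (if j = l + 1 then (n:ℂ) else 0)
          = (if j = l + 1 then ((x (l+1) : ℂ) * (x l : ℂ)) * n else 0) := by
        intro j
        split_ifs with hh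
        · rw [hh]
        · simp
      simp_rw [this]
      rw [Finset.sum_ite_eq' Finset.univ (l+1) (fun _ => ((x (l+1) : ℂ) * (x l : ℂ)) * n)]
      simp
      ring
    have hcos : ∀ k : Fin n, ((Real.cos (2 * π * (k:ℕ) / n) : ℝ) : ℂ)
        = (ζ ^ (((k:ℕ)):ℤ) + ζ ^ (-((k:ℕ):ℤ))) / 2 := by
      intro k
      have h1 : ζ ^ (((k:ℕ)):ℤ) = Complex.exp (((2 * π * (k:ℕ) / n : ℝ) : ℂ) * Complex.I) := by
        rw [zpow_natCast, hζdef, ← Complex.exp_nat_mul]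
        congr 1
        push_cast
        field_simp
      have h2 : ζ ^ (-((k:ℕ):ℤ)) = Complex.exp (-(((2 * π * (k:ℕ) / n : ℝ) : ℂ) * Complex.I)) := by
        rw [_root_.zpow_neg, h1, ← Complex.exp_neg]
      rw [h1, h2, Complex.ofReal_cos, Complex.cos]
      rw [neg_mul]
    have hbig : ∑ k : Fin n, ((c:ℂ) + ((Real.cos (2 * π * (k:ℕ) / n) : ℝ) : ℂ))
          * (F k * (starRingEnd ℂ) (F k))
        = (n:ℂ) * ((c:ℂ) * ∑ j, (x j : ℂ) * (x j) + ∑ j, (x j : ℂ) * (x (j+1))) := by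
      simp_rw [add_mul]
      rw [Finset.sum_add_distrib]
      have part1 : ∑ k : Fin n, (c:ℂ) * (F k * (starRingEnd ℂ) (F k))
          = (c:ℂ) * ((n:ℂ) * ∑ j, (x j : ℂ) * (x j)) := by
        rw [← Finset.mul_sum, hE0]
      have part2 : ∑ k : Fin n, ((Real.cos (2 * π * (k:ℕ) / n) : ℝ) : ℂ)
            * (F k * (starRingEnd ℂ) (F k))
          = (n:ℂ) * ∑ j, (x j : ℂ) * (x (j+1)) := by
        simp_rw [hcos, div_mul_eq_mul_div, add_mul, ← Finset.sum_div]
        rw [Finset.sum_add_distrib, hE1, hE2]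
        ring
      rw [part1, part2]
      ring
    have hG : ∑ k : Fin n, (c + Real.cos (2 * π * (k:ℕ) / n)) * Complex.normSq (F k)
        = n * (c * P + T) := by
      have h2 : ((∑ k : Fin n, (c + Real.cos (2 * π * (k:ℕ) / n)) * Complex.normSq (F k) : ℝ) : ℂ)
          = (((n : ℝ) * (c * P + T) : ℝ) : ℂ) := by
        rw [Complex.ofReal_sum]
        have hterm : ∀ k : Fin n, ((((c + Real.cos (2 * π * (k:ℕ) / n)) * Complex.normSq (F k) : ℝ)) : ℂ)
            = ((c:ℂ) + ((Real.cos (2 * π * (k:ℕ) / n) : ℝ) : ℂ)) * (F k * (starRingEnd ℂ) (F k)) := by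
          intro k
          rw [Complex.ofReal_mul, Complex.ofReal_add, Complex.mul_conj]
        simp_rw [hterm]
        rw [hbig, hPdef, hTdef]
        push_cast
        ring
      exact_mod_cast h2
    have hF0 : Complex.normSq (F 0) = S * S := by
      have h1 : F 0 = ((S : ℝ) : ℂ) := by
        rw [hFdef, hSdef]
        simp only [Fin.val_zero, Nat.cast_zero, zero_mul, zpow_zero, mul_one]
        rw [Complex.ofReal_sum]
      rw [h1, Complex.normSq_ofReal]
    have hg0 : (c + Real.cos (2 * π * (((0: Fin n):ℕ)) / n)) * Complex.normSq (F 0)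
        = (c + 1) * (S * S) := by
      rw [hF0]
      congr 2
      simp
    set Gf : Fin n → ℝ := fun k => (c + Real.cos (2 * π * (k:ℕ) / n)) * Complex.normSq (F k)
      with hGfdef
    have hsplit : ∑ k : Fin n, Gf k = Gf 0 + ∑ k ∈ Finset.univ.erase 0, Gf k :=
      (Finset.add_sum_erase _ _ (Finset.mem_univ 0)).symm
    have hkey : (n:ℝ) * c * (P + (1/(2*c)) * (2*T) - ((1+c)/((n:ℝ)*c)) * (S*S))
        = ∑ k ∈ Finset.univ.erase 0, Gf k := by
      have e1 : ∑ k : Fin n, Gf k = n * (c * P + T) := hG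
      rw [hsplit] at e1
      rw [hGfdef] at e1
      simp only [] at e1
      rw [hg0] at e1
      have expand : (n:ℝ) * c * (P + (1/(2*c)) * (2*T) - ((1+c)/((n:ℝ)*c)) * (S*S))
          = n * c * P + n * T - (1+c) * (S*S) := by
        field_simp
      rw [expand]
      linarith [e1]
    have hnonneg : 0 ≤ ∑ k ∈ Finset.univ.erase 0, Gf k := by
      apply Finset.sum_nonneg
      intro k _
      apply mul_nonneg
      · exact cos_bound n hn hodd k
      · exact Complex.normSq_nonneg _
    have hnc : (0:ℝ) < (n:ℝ) * c := by positivity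
    by_contra hneg
    push_neg at hneg
    have h2 := mul_neg_of_pos_of_neg hnc hneg
    rw [hkey] at h2
    linarith
end

section
/- For any odd integer n ≥ 3, the (1+n)×(1+n) block matrix Z_n with top-left entry θ = n·cos(π/n)/(1 + cos(π/n)), first row and column equal to −1 on entries 1,…,n, and bottom-right block I_n + ((n − θ)/(2θ))·A_{C_n}, is positive semidefinite. -/
open Real Finset Matrix

private noncomputable def sN (m k : ℕ) : ℝ := Real.sin (k * π / (m+3 : ℕ))
private noncomputable def cN (m k : ℕ) : ℝ := Real.cos (k * π / (m+3 : ℕ))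

private lemma castN (m : ℕ) : ((m+3 : ℕ) : ℝ) ≠ 0 := by positivity

private lemma sN_pos (m k : ℕ) (h1 : 1 ≤ k) (h2 : k ≤ m+2) : 0 < sN m k := by
  have hN : (0:ℝ) < ((m+3:ℕ):ℝ) := by positivity
  apply Real.sin_pos_of_pos_of_lt_pi
  · have hk : (0:ℝ) < (k:ℝ) := by exact_mod_cast h1
    positivity
  · rw [div_lt_iff₀ hN]
    have : (k:ℝ) ≤ (m:ℝ)+2 := by exact_mod_cast h2
    have : (k:ℝ) < ((m+3:ℕ):ℝ) := by push_cast; linarith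
    nlinarith [pi_pos]

private lemma sN_zero (m : ℕ) : sN m 0 = 0 := by simp [sN]

private lemma sN_succ (m k : ℕ) : sN m (k+1) = sN m k * cN m 1 + cN m k * sN m 1 := by
  unfold sN cN
  have h : ((k+1:ℕ):ℝ) * π / ((m+3:ℕ):ℝ) = (k:ℝ) * π / ((m+3:ℕ):ℝ) + (1:ℕ) * π / ((m+3:ℕ):ℝ) := by
    push_cast; ring
  rw [h, Real.sin_add]

private lemma cN_succ (m k : ℕ) : cN m (k+1) = cN m k * cN m 1 - sN m k * sN m 1 := by
  unfold sN cN
  have h : ((k+1:ℕ):ℝ) * π / ((m+3:ℕ):ℝ) = (k:ℝ) * π / ((m+3:ℕ):ℝ) + (1:ℕ) * π / ((m+3:ℕ):ℝ) := by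
    push_cast; ring
  rw [h, Real.cos_add]


private lemma pythN (m k : ℕ) : (cN m k)^2 + (sN m k)^2 = 1 := by
  unfold sN cN; exact Real.cos_sq_add_sin_sq _

private lemma sN_prev (m k : ℕ) : sN m k = sN m (k+1) * cN m 1 - cN m (k+1) * sN m 1 := by
  rw [sN_succ m k, cN_succ m k]
  linear_combination (-(sN m k)) * pythN m 1

private lemma last_angle (m : ℕ) : ((m+2:ℕ):ℝ) * π / ((m+3:ℕ):ℝ) = π - (1:ℕ) * π / ((m+3:ℕ):ℝ) := by
  have h := castN m
  field_simp
  push_cast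
  ring

private lemma sN_last (m : ℕ) : sN m (m+2) = sN m 1 := by
  unfold sN; rw [last_angle, Real.sin_pi_sub]

private lemma cN_last (m : ℕ) : cN m (m+2) = -(cN m 1) := by
  unfold cN; rw [last_angle, Real.cos_pi_sub]

private lemma sN_penult (m : ℕ) : sN m (m+1) = 2 * sN m 1 * cN m 1 := by
  unfold sN cN
  have h : ((m+1:ℕ):ℝ) * π / ((m+3:ℕ):ℝ) = π - 2 * ((1:ℕ) * π / ((m+3:ℕ):ℝ)) := by
    have := castN m; field_simp; push_cast; ring
  rw [h, Real.sin_pi_sub, Real.sin_two_mul]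

lemma step_helper (S1 S2 Si C1 C2 s1 c a b d ε : ℝ) (hS1 : 0 < S1) (hS2 : 0 < S2)
    (hSi : Si = S1*c - C1*s1) (hS2e : S2 = S1*c + C1*s1) (hC2 : C2 = C1*c - S1*s1)
    (hpy : C1^2 + S1^2 = 1) (hε : ε^2 = 1) :
    (-(S1)*d^2 + 2*(-ε)*s1*a*d + s1*C2*a^2)/S2 ≤
      (-(Si)*b^2 + 2*ε*s1*a*b + s1*C1*a^2)/S1 + 2*c*b^2 + 2*b*d := by
  have h1 : S1 ≠ 0 := hS1.ne'
  have h2 : S2 ≠ 0 := hS2.ne'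
  have main : (-(Si)*b^2 + 2*ε*s1*a*b + s1*C1*a^2)*S2 + (2*c*b^2 + 2*b*d)*(S1*S2)
      - (-(S1)*d^2 + 2*(-ε)*s1*a*d + s1*C2*a^2)*S1 = (S2*b + S1*d + ε*s1*a)^2 := by
    subst hSi hS2e hC2
    linear_combination (s1^2*a^2)*hpy - (s1^2*a^2)*hε
  have expand : (-(Si)*b^2 + 2*ε*s1*a*b + s1*C1*a^2)/S1 + 2*c*b^2 + 2*b*d
      - (-(S1)*d^2 + 2*(-ε)*s1*a*d + s1*C2*a^2)/S2
      = ((-(Si)*b^2 + 2*ε*s1*a*b + s1*C1*a^2)*S2 + (2*c*b^2 + 2*b*d)*(S1*S2)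
        - (-(S1)*d^2 + 2*(-ε)*s1*a*d + s1*C2*a^2)*S1)/(S1*S2) := by
    field_simp
    ring
  rw [main] at expand
  have hnn : 0 ≤ (S2*b + S1*d + ε*s1*a)^2 / (S1*S2) :=
    div_nonneg (sq_nonneg _) (mul_pos hS1 hS2).le
  linarith [expand ▸ hnn]

lemma key_cycle (m : ℕ) (hm : Even m) (w : ℕ → ℝ) (hw : w (m+3) = w 0) :
    0 ≤ cN m 1 * ∑ i ∈ range (m+3), (w i)^2 + ∑ i ∈ range (m+3), w i * w (i+1) := by
  have main : ∀ i, i ≤ m + 1 →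
      (-(sN m i)*(w (i+1))^2 + 2*((-1:ℝ)^i)*(sN m 1)*(w 0)*(w (i+1))
        + (sN m 1)*(cN m (i+1))*(w 0)^2)/(sN m (i+1))
      ≤ 2*(cN m 1)*(∑ j ∈ range i, (w (j+1))^2)
        + 2*(∑ k ∈ range (i+1), w k * w (k+1)) + (cN m 1)*(w 0)^2 := by
    intro i
    induction i with
    | zero =>
      intro _
      have h0 : sN m 0 = 0 := sN_zero m
      have h1 : sN m 1 ≠ 0 := (sN_pos m 1 le_rfl (by omega)).ne'
      rw [h0]
      simp only [Finset.range_zero, Finset.sum_empty, zero_add, Finset.range_one, Finset.sum_singleton,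
        pow_zero]
      apply le_of_eq
      field_simp
      ring
    | succ k ih =>
      intro hk
      have ihk := ih (by omega)
      have hε : (((-1:ℝ)^k))^2 = 1 := by
        rw [← pow_mul, mul_comm, pow_mul]; norm_num
      have hstep := step_helper (sN m (k+1)) (sN m (k+2)) (sN m k) (cN m (k+1)) (cN m (k+2))
        (sN m 1) (cN m 1) (w 0) (w (k+1)) (w (k+2)) ((-1:ℝ)^k)
        (sN_pos m (k+1) (by omega) (by omega)) (sN_pos m (k+2) (by omega) (by omega))
        (sN_prev m k) (sN_succ m (k+1)) (cN_succ m (k+1)) (pythN m (k+1)) hε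
      have hpow : ((-1:ℝ)^(k+1)) = -((-1:ℝ)^k) := by rw [pow_succ]; ring
      rw [hpow, Finset.sum_range_succ, Finset.sum_range_succ (fun k => w k * w (k+1)) (k+1)]
      calc (-(sN m (k+1))*(w (k+2))^2 + 2*(-((-1:ℝ)^k))*(sN m 1)*(w 0)*(w (k+2))
            + (sN m 1)*(cN m (k+2))*(w 0)^2)/(sN m (k+2))
          ≤ (-(sN m k)*(w (k+1))^2 + 2*((-1:ℝ)^k)*(sN m 1)*(w 0)*(w (k+1))
            + (sN m 1)*(cN m (k+1))*(w 0)^2)/(sN m (k+1))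
            + 2*(cN m 1)*(w (k+1))^2 + 2*(w (k+1))*(w (k+2)) := hstep
        _ ≤ _ := by linarith
  have h := main (m+1) le_rfl
  have e1 : sN m (m+1+1) = sN m 1 := sN_last m
  have e2 : cN m (m+1+1) = -(cN m 1) := cN_last m
  have e3 : sN m (m+1) = 2 * sN m 1 * cN m 1 := sN_penult m
  have e4 : ((-1:ℝ)^(m+1)) = -1 := Odd.neg_one_pow (Even.add_one hm)
  have h1 : sN m 1 ≠ 0 := (sN_pos m 1 le_rfl (by omega)).ne'
  rw [e1, e2, e3, e4] at h
  have hval : (-(2 * sN m 1 * cN m 1)*(w (m+1+1))^2 + 2*(-1:ℝ)*(sN m 1)*(w 0)*(w (m+1+1))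
      + (sN m 1)*(-(cN m 1))*(w 0)^2)/(sN m 1)
      = -(2*(cN m 1)*(w (m+2))^2) - 2*(w 0)*(w (m+2)) - (cN m 1)*(w 0)^2 := by
    field_simp
    ring
  rw [hval] at h
  have hs1 : ∑ i ∈ range (m+3), (w i)^2
      = (w 0)^2 + (∑ j ∈ range (m+1), (w (j+1))^2) + (w (m+2))^2 := by
    rw [Finset.sum_range_succ' (fun i => (w i)^2) (m+2), Finset.sum_range_succ]
    ring
  have hs2 : ∑ i ∈ range (m+3), w i * w (i+1)
      = (∑ k ∈ range (m+2), w k * w (k+1)) + w (m+2) * w 0 := by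
    rw [Finset.sum_range_succ]
    rw [hw]
  rw [hs1, hs2]
  linarith

/-- The dual optimal matrix `Z_n` for the KCBS SDP on the odd `n`-cycle:
top-left entry `θ = n cos(π/n)/(1+cos(π/n))`, border entries `−1`, diagonal `1`,
entries `(n−θ)/(2θ)` on cycle-adjacent pairs of `{1,…,n}`, zero elsewhere. -/
noncomputable def kcbsDual (n : ℕ) : Matrix (Fin (n + 1)) (Fin (n + 1)) ℝ :=
  fun i j =>
    let θ : ℝ := n * Real.cos (π / n) / (1 + Real.cos (π / n))
    if i.val = 0 ∧ j.val = 0 then θ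
    else if i.val = 0 ∨ j.val = 0 then -1
    else if i = j then 1
    else if j.val = i.val % n + 1 ∨ i.val = j.val % n + 1 then (n - θ) / (2 * θ)
    else 0

set_option maxHeartbeats 1000000 in
/-- For any odd `n ≥ 3`, the matrix `Z_n` is positive semidefinite. -/
theorem kcbsDual_posSemidef (n : ℕ) (hn : 3 ≤ n) (hodd : Odd n) :
    (kcbsDual n).PosSemidef := by
  rw [Matrix.posSemidef_iff_dotProduct_mulVec]
  constructor
  · rw [Matrix.IsHermitian]
    ext i j
    simp only [Matrix.conjTranspose_apply, kcbsDual, star_trivial]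
    split_ifs <;> first | rfl | omega
  intro x
  rw [star_trivial]
  have hnpos : 0 < n := by omega
  have hnR : (0:ℝ) < n := by exact_mod_cast hnpos
  set c : ℝ := Real.cos (π / n) with hc
  set θ : ℝ := n * c / (1 + c) with hθ
  set β : ℝ := 1 / (2*c) with hβ
  have hcpos : 0 < c := by
    rw [hc]
    apply Real.cos_pos_of_mem_Ioo
    constructor
    · have : 0 < π / n := by positivity
      linarith [pi_pos]
    · rw [div_lt_div_iff₀ hnR two_pos]
      have h2 : (2:ℝ) < n := by exact_mod_cast (by omega : 2 < n)
      nlinarith [pi_pos]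
  have hc1 : (0:ℝ) < 1 + c := by linarith
  have hθpos : 0 < θ := by rw [hθ]; positivity
  have hβe : ((n:ℝ) - θ) / (2 * θ) = β := by
    rw [hθ, hβ]
    field_simp
    ring
  -- entry lemmas
  have hZ00 : kcbsDual n 0 0 = θ := by
    simp only [kcbsDual, ← hc, ← hθ]
    norm_num
  have hZ0 : ∀ j : Fin n, kcbsDual n 0 j.succ = -1 := by
    intro j
    simp [kcbsDual, Fin.val_succ]
  have hZi0 : ∀ i : Fin n, kcbsDual n i.succ 0 = -1 := by
    intro i
    simp [kcbsDual, Fin.val_succ]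
  have hZij : ∀ i j : Fin n, kcbsDual n i.succ j.succ =
      (if (j:ℕ) = (i:ℕ) then (1:ℝ) else 0)
      + β * (if (j:ℕ) = ((i:ℕ)+1) % n then 1 else 0)
      + β * (if (j:ℕ) = ((i:ℕ)+(n-1)) % n then 1 else 0) := by
    intro i j
    have hi := i.isLt
    have hj := j.isLt
    have e1i : ((i:ℕ)+1) % n = if (i:ℕ) = n-1 then 0 else (i:ℕ)+1 := by
      split_ifs with h
      · rw [h, Nat.sub_add_cancel (by omega), Nat.mod_self]
      · exact Nat.mod_eq_of_lt (by omega)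
    have e1j : ((j:ℕ)+1) % n = if (j:ℕ) = n-1 then 0 else (j:ℕ)+1 := by
      split_ifs with h
      · rw [h, Nat.sub_add_cancel (by omega), Nat.mod_self]
      · exact Nat.mod_eq_of_lt (by omega)
    have e2i : ((i:ℕ)+(n-1)) % n = if (i:ℕ) = 0 then n-1 else (i:ℕ)-1 := by
      split_ifs with h
      · rw [h, Nat.zero_add]; exact Nat.mod_eq_of_lt (by omega)
      · have h2 : (i:ℕ)+(n-1) = ((i:ℕ)-1) + n := by omega
        rw [h2, Nat.add_mod_right]
        exact Nat.mod_eq_of_lt (by omega)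
    simp only [kcbsDual, ← hc, ← hθ, hβe, Fin.val_succ, Fin.ext_iff,
      Nat.add_eq_zero, one_ne_zero, and_false, false_and, or_self, false_or, or_false,
      if_false]
    rw [e1i, e1j, e2i]
    split_ifs <;> first | omega | ring
  -- the coordinate functions
  set v : ℕ → ℝ := fun k => x ⟨k % n + 1, Nat.succ_lt_succ (Nat.mod_lt k hnpos)⟩ with hv
  have hvp : ∀ k, v (k % n) = v k := by
    intro k
    simp only [hv]
    congr 2
    exact congrArg (· + 1) (Nat.mod_mod_of_dvd k dvd_rfl)
  have hvn : ∀ k, v (k + n) = v k := by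
    intro k
    rw [← hvp (k+n), Nat.add_mod_right, hvp]
  have hxv : ∀ i : Fin n, x i.succ = v i.val := by
    intro i
    simp only [hv]
    congr 1
    exact Fin.ext (by simp [Fin.val_succ, Nat.mod_eq_of_lt i.isLt])
  have row0 : ∑ j : Fin (n+1), kcbsDual n 0 j * x j = θ * x 0 - ∑ j ∈ range n, v j := by
    rw [Fin.sum_univ_succ, hZ00]
    have h1 : ∀ j : Fin n, kcbsDual n 0 j.succ * x j.succ = -(v j.val) := by
      intro j; rw [hZ0 j, hxv j]; ring
    rw [Finset.sum_congr rfl (fun j _ => h1 j)]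
    rw [Fin.sum_univ_eq_sum_range (fun k => -(v k)) n]
    rw [Finset.sum_neg_distrib]
    ring
  have rowi : ∀ i : Fin n, ∑ j : Fin (n+1), kcbsDual n i.succ j * x j
      = -(x 0) + (v i.val + β * v ((i.val+1) % n) + β * v ((i.val+(n-1)) % n)) := by
    intro i
    rw [Fin.sum_univ_succ, hZi0 i]
    have h1 : ∀ j : Fin n, kcbsDual n i.succ j.succ * x j.succ
        = (if (j:ℕ) = (i:ℕ) then v (j:ℕ) else 0)
          + (if (j:ℕ) = ((i:ℕ)+1) % n then β * v (j:ℕ) else 0)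
          + (if (j:ℕ) = ((i:ℕ)+(n-1)) % n then β * v (j:ℕ) else 0) := by
      intro j
      rw [hZij i j, hxv j]
      split_ifs <;> ring
    rw [Finset.sum_congr rfl (fun j _ => h1 j)]
    rw [Fin.sum_univ_eq_sum_range (fun k =>
      (if k = (i:ℕ) then v k else 0)
      + (if k = ((i:ℕ)+1) % n then β * v k else 0)
      + (if k = ((i:ℕ)+(n-1)) % n then β * v k else 0)) n]
    rw [Finset.sum_add_distrib, Finset.sum_add_distrib,
      Finset.sum_ite_eq' (range n) ((i:ℕ)) v,
      Finset.sum_ite_eq' (range n) (((i:ℕ)+1) % n) (fun k => β * v k),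
      Finset.sum_ite_eq' (range n) (((i:ℕ)+(n-1)) % n) (fun k => β * v k)]
    rw [if_pos (Finset.mem_range.mpr i.isLt),
      if_pos (Finset.mem_range.mpr (Nat.mod_lt _ hnpos)),
      if_pos (Finset.mem_range.mpr (Nat.mod_lt _ hnpos))]
    ring
  have expand : x ⬝ᵥ (kcbsDual n).mulVec x
      = x 0 * (θ * x 0 - ∑ j ∈ range n, v j)
        + ∑ i ∈ range n, v i * (-(x 0) + (v i + β * v (i+1) + β * v (i+(n-1)))) := by
    simp only [dotProduct, Matrix.mulVec]
    rw [Fin.sum_univ_succ, row0]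
    have h2 : ∀ i : Fin n, x i.succ * (∑ j : Fin (n+1), kcbsDual n i.succ j * x j)
        = v i.val * (-(x 0) + (v i.val + β * v ((i.val+1) % n) + β * v ((i.val+(n-1)) % n))) := by
      intro i; rw [rowi i, hxv i]
    rw [Finset.sum_congr rfl (fun i _ => h2 i)]
    rw [Fin.sum_univ_eq_sum_range (fun k =>
      v k * (-(x 0) + (v k + β * v ((k+1) % n) + β * v ((k+(n-1)) % n)))) n]
    congr 1
    apply Finset.sum_congr rfl
    intro k _
    rw [hvp (k+1), hvp (k+(n-1))]
  set S : ℝ := ∑ j ∈ range n, v j with hS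
  have key1 : ∀ f : ℕ → ℝ, ∑ i ∈ range n, f i = (∑ i ∈ range (n-1), f (i+1)) + f 0 := by
    intro f
    conv_lhs => rw [show n = (n-1)+1 by omega]
    rw [Finset.sum_range_succ']
  have key2 : ∀ f : ℕ → ℝ, ∑ i ∈ range n, f i = (∑ i ∈ range (n-1), f i) + f (n-1) := by
    intro f
    conv_lhs => rw [show n = (n-1)+1 by omega]
    rw [Finset.sum_range_succ]
  have hn1 : n - 1 + 1 = n := by omega
  have hv0 : v n = v 0 := by have := hvn 0; simpa using this
  have hshift : ∑ i ∈ range n, v i * v (i+(n-1)) = ∑ i ∈ range n, v i * v (i+1) := by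
    rw [key1 (fun i => v i * v (i+(n-1))), key2 (fun i => v i * v (i+1))]
    have hvm : ∀ i : ℕ, v (i+1+(n-1)) = v i := by
      intro i
      have h : i+1+(n-1) = i + n := by omega
      rw [h, hvn]
    have e1 : ∀ i : ℕ, v (i+1) * v (i+1+(n-1)) = v i * v (i+1) := by
      intro i; rw [hvm i]; ring
    rw [Finset.sum_congr rfl (fun i _ => e1 i)]
    have e2 : v (n-1) * v (n-1+1) = v 0 * v (n-1) := by
      rw [hn1, hv0]; ring
    rw [e2]
    norm_num
  have hQ : x ⬝ᵥ (kcbsDual n).mulVec x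
      = θ * (x 0)^2 - 2 * (x 0) * S + (∑ i ∈ range n, (v i)^2)
        + 2 * β * (∑ i ∈ range n, v i * v (i+1)) := by
    rw [expand]
    have hsplit : ∑ i ∈ range n, v i * (-(x 0) + (v i + β * v (i+1) + β * v (i+(n-1))))
        = -(x 0) * S + (∑ i ∈ range n, (v i)^2)
          + β * (∑ i ∈ range n, v i * v (i+1)) + β * (∑ i ∈ range n, v i * v (i+(n-1))) := by
      rw [Finset.sum_congr rfl (fun i _ => (by ring :
        v i * (-(x 0) + (v i + β * v (i+1) + β * v (i+(n-1))))
        = -(x 0) * v i + (v i)^2 + β * (v i * v (i+1)) + β * (v i * v (i+(n-1)))))]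
      rw [Finset.sum_add_distrib, Finset.sum_add_distrib, Finset.sum_add_distrib,
        ← Finset.mul_sum, ← Finset.mul_sum, ← Finset.mul_sum, ← hS]
    rw [hsplit, hshift]
    ring
  -- center the variables
  set w : ℕ → ℝ := fun k => v k - S / n with hw
  have hnne : (n:ℝ) ≠ 0 := ne_of_gt hnR
  have hwn : w n = w 0 := by simp only [hw]; rw [hv0]
  have hSw : ∑ i ∈ range n, w i = 0 := by
    simp only [hw]
    rw [Finset.sum_sub_distrib, Finset.sum_const, Finset.card_range, ← hS]
    rw [nsmul_eq_mul]
    field_simp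
    ring
  have hSw' : ∑ i ∈ range n, w (i+1) = 0 := by
    have e1 := key1 w
    have e2 := key2 (fun i => w (i+1))
    rw [hn1, hwn] at e2
    rw [e1] at hSw
    rw [e2]
    exact hSw
  have hA2 : ∑ i ∈ range n, (v i)^2 = (∑ i ∈ range n, (w i)^2) + S^2/n := by
    have hvw : ∀ i : ℕ, (v i)^2 = (w i)^2 + 2*(S/n)*(w i) + (S/n)^2 := by
      intro i
      have h : v i = w i + S/n := by simp [hw]
      rw [h]; ring
    rw [Finset.sum_congr rfl (fun i _ => hvw i)]
    rw [Finset.sum_add_distrib, Finset.sum_add_distrib, ← Finset.mul_sum, hSw,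
      Finset.sum_const, Finset.card_range]
    field_simp
    linear_combination S^2 * (by rw [← mul_pow, mul_inv_cancel₀ hnne, one_pow] : (n:ℝ)^2 * (n:ℝ)⁻¹^2 = 1)
  have hB2 : ∑ i ∈ range n, v i * v (i+1)
      = (∑ i ∈ range n, w i * w (i+1)) + S^2/n := by
    have hvw : ∀ i : ℕ, v i * v (i+1)
        = w i * w (i+1) + (S/n)*(w i) + (S/n)*(w (i+1)) + (S/n)^2 := by
      intro i
      have e1 : v i = w i + S/n := by simp [hw]
      have e2 : v (i+1) = w (i+1) + S/n := by simp [hw]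
      rw [e1, e2]; ring
    rw [Finset.sum_congr rfl (fun i _ => hvw i)]
    rw [Finset.sum_add_distrib, Finset.sum_add_distrib, Finset.sum_add_distrib,
      ← Finset.mul_sum, ← Finset.mul_sum, hSw, hSw', Finset.sum_const, Finset.card_range]
    field_simp
    linear_combination S^2 * (by rw [← mul_pow, mul_inv_cancel₀ hnne, one_pow] : (n:ℝ)^2 * (n:ℝ)⁻¹^2 = 1)
  have hmev : Even (n - 3) := by
    rcases hodd with ⟨k, hk⟩
    exact ⟨k-1, by omega⟩
  have hn3 : (n-3)+3 = n := by omega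
  have hwk : w ((n-3)+3) = w 0 := by rw [hn3]; exact hwn
  have hkey := key_cycle (n-3) hmev w hwk
  rw [hn3] at hkey
  have hcn : cN (n-3) 1 = c := by
    unfold cN
    rw [hn3, hc]
    norm_num
  rw [hcn] at hkey
  have h1 : θ * (x 0)^2 - 2*(x 0)*S + S^2/n + 2*β*(S^2/n) = θ*((x 0) - S/θ)^2 := by
    rw [hθ, hβ]
    field_simp
    ring
  have h2 : 0 ≤ θ*((x 0) - S/θ)^2 := by positivity
  have h3 : (∑ i ∈ range n, (w i)^2) + 2*β*(∑ i ∈ range n, w i * w (i+1))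
      = (1/c) * (c * (∑ i ∈ range n, (w i)^2) + ∑ i ∈ range n, w i * w (i+1)) := by
    rw [hβ]
    field_simp
  have h4 : 0 ≤ (1/c) * (c * (∑ i ∈ range n, (w i)^2) + ∑ i ∈ range n, w i * w (i+1)) :=
    mul_nonneg (by positivity) hkey
  rw [hQ, hA2, hB2]
  nlinarith [h1, h2, h3, h4]
end

section
/- Let n be an odd integer ≥ 5. Suppose M is a symmetric (1+n)×(1+n) real matrix (indexed by {0,1,…,n}) satisfying M₀₀ = 0, M_{0i} = M_{ii} for 1 ≤ i ≤ n, M_{i,i+1 mod n} = 0 for 1 ≤ i ≤ n, and M Z_n = 0, where Z_n is the dual optimal matrix for the n-cycle (top-left entry θ = n cos(π/n)/(1+cos(π/n)), off-border entries −1, bottom block I + ((n−θ)/(2θ))A_{C_n}). Then M = 0. -/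
open Real

private def cyc (n : ℕ) (hn : 0 < n) (a : ℤ) : Fin (n + 1) :=
  ⟨((a - 1) % (n : ℤ)).toNat + 1, by
    have h1 : 0 ≤ (a - 1) % (n : ℤ) := Int.emod_nonneg _ (by exact_mod_cast hn.ne')
    have h2 : (a - 1) % (n : ℤ) < n := Int.emod_lt_of_pos _ (by exact_mod_cast hn)
    omega⟩

private lemma cyc_val (n : ℕ) (hn : 0 < n) (a : ℤ) :
    (cyc n hn a).val = ((a - 1) % (n : ℤ)).toNat + 1 := rfl

private lemma cyc_bounds (n : ℕ) (hn : 0 < n) (a : ℤ) :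
    1 ≤ (cyc n hn a).val ∧ (cyc n hn a).val ≤ n := by
  have h1 : 0 ≤ (a - 1) % (n : ℤ) := Int.emod_nonneg _ (by exact_mod_cast hn.ne')
  have h2 : (a - 1) % (n : ℤ) < n := Int.emod_lt_of_pos _ (by exact_mod_cast hn)
  rw [cyc_val]; omega

private lemma cyc_ne_zero (n : ℕ) (hn : 0 < n) (a : ℤ) : cyc n hn a ≠ 0 := by
  intro h
  have := congrArg Fin.val h
  rw [cyc_val] at this
  simp at this

private lemma cyc_congr (n : ℕ) (hn : 0 < n) {a b : ℤ} (h : a % (n:ℤ) = b % (n:ℤ)) :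
    cyc n hn a = cyc n hn b := by
  apply Fin.ext
  rw [cyc_val, cyc_val]
  have : (a - 1) % (n:ℤ) = (b - 1) % (n:ℤ) := Int.ModEq.sub_right 1 h
  rw [this]

private lemma cyc_inj (n : ℕ) (hn : 0 < n) {a b : ℤ} (h : cyc n hn a = cyc n hn b) :
    a % (n:ℤ) = b % (n:ℤ) := by
  have := congrArg Fin.val h
  rw [cyc_val, cyc_val] at this
  have h1 : 0 ≤ (a - 1) % (n : ℤ) := Int.emod_nonneg _ (by exact_mod_cast hn.ne')
  have h2 : 0 ≤ (b - 1) % (n : ℤ) := Int.emod_nonneg _ (by exact_mod_cast hn.ne')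
  have heq : (a - 1) % (n:ℤ) = (b - 1) % (n:ℤ) := by omega
  have : a - 1 ≡ b - 1 [ZMOD (n:ℤ)] := heq
  have := Int.ModEq.add_right 1 this
  simpa [Int.ModEq] using this

private lemma cyc_add_n (n : ℕ) (hn : 0 < n) (a : ℤ) : cyc n hn (a + n) = cyc n hn a := by
  apply cyc_congr
  simp [Int.add_mul_emod_self_left, Int.add_emod]

private lemma cyc_succ_val (n : ℕ) (hn : 0 < n) (hn1 : 1 < n) (a : ℤ) :
    (cyc n hn (a + 1)).val = (cyc n hn a).val % n + 1 := by
  have h1 : 0 ≤ (a - 1) % (n : ℤ) := Int.emod_nonneg _ (by exact_mod_cast hn.ne')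
  have h2 : (a - 1) % (n : ℤ) < n := Int.emod_lt_of_pos _ (by exact_mod_cast hn)
  rw [cyc_val, cyc_val]
  have ha : (a + 1 - 1) % (n:ℤ) = ((a - 1) % n + 1) % n := by
    conv_lhs => rw [show a + 1 - 1 = (a - 1) + 1 by ring]
    rw [Int.add_emod,
      Int.emod_eq_of_lt (by omega : (0:ℤ) ≤ 1) (by exact_mod_cast hn1)]
  rw [ha]
  rcases eq_or_lt_of_le (by omega : (a-1) % (n:ℤ) + 1 ≤ n) with h | h
  · rw [h, Int.emod_self]
    have : ((a-1) % (n:ℤ)).toNat + 1 = n := by omega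
    simp [this]
  · rw [Int.emod_eq_of_lt (by omega) h]
    have : (((a-1) % (n:ℤ)).toNat + 1) % n = ((a-1) % (n:ℤ)).toNat + 1 :=
      Nat.mod_eq_of_lt (by omega)
    omega

private lemma cyc_fix (n : ℕ) (hn : 0 < n) (j : Fin (n+1)) (hj : j ≠ 0) :
    cyc n hn (j.val : ℤ) = j := by
  apply Fin.ext
  rw [cyc_val]
  have hj' : j.val ≠ 0 := by
    intro h; exact hj (Fin.ext (by simp [h]))
  have hjn : j.val ≤ n := by omega
  have : ((j.val : ℤ) - 1) % (n:ℤ) = (j.val : ℤ) - 1 :=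
    Int.emod_eq_of_lt (by omega) (by omega)
  rw [this]
  omega

private noncomputable def hfun (n : ℕ) (k : ℕ) : ℝ :=
  (Real.cos (π / n) + Real.cos (k * (π - π / n))) / (1 + Real.cos (π / n))

private lemma cos_half_lt (n : ℕ) (hn : 5 ≤ n) : 1 / 2 < Real.cos (π / n) := by
  have hπ : 0 < π := Real.pi_pos
  have h3 : π / n < π / 3 := by
    apply div_lt_div_of_pos_left hπ (by norm_num)
    exact_mod_cast by omega
  have := Real.cos_lt_cos_of_nonneg_of_le_pi (by positivity) (by linarith [Real.pi_gt_three]) h3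
  rw [Real.cos_pi_div_three] at this
  linarith

private lemma one_add_cos_pos (n : ℕ) (hn : 5 ≤ n) : (0:ℝ) < 1 + Real.cos (π / n) := by
  have := cos_half_lt n hn; linarith

private lemma hfun_zero (n : ℕ) (hn : 5 ≤ n) : hfun n 0 = 1 := by
  have h1 := one_add_cos_pos n hn
  rw [hfun]
  push_cast
  rw [zero_mul, Real.cos_zero, div_eq_one_iff_eq (by linarith)]
  ring

private lemma hfun_one (n : ℕ) : hfun n 1 = 0 := by
  rw [hfun]
  push_cast
  rw [one_mul, Real.cos_pi_sub]
  simp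

private lemma hfun_two (n : ℕ) (hn : 5 ≤ n) : hfun n 2 = 2 * Real.cos (π / n) - 1 := by
  have h1 := one_add_cos_pos n hn
  rw [hfun]
  push_cast
  rw [Real.cos_two_mul, Real.cos_pi_sub]
  rw [div_eq_iff (by linarith)]
  ring

private lemma hfun_rec (n : ℕ) (hn : 5 ≤ n) (k : ℕ) :
    hfun n (k + 2) = 2 * Real.cos (π / n) * (1 - hfun n (k + 1)) - hfun n k := by
  have h1 := one_add_cos_pos n hn
  have key : Real.cos (((k:ℝ)+1)*(π - π/n) + (π - π/n)) + Real.cos (((k:ℝ)+1)*(π - π/n) - (π - π/n))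
      = 2 * Real.cos (((k:ℝ)+1)*(π - π/n)) * -(Real.cos (π/n)) := by
    linear_combination Real.cos_add (((k:ℝ)+1)*(π - π/n)) (π - π/n)
      + Real.cos_sub (((k:ℝ)+1)*(π - π/n)) (π - π/n)
      + 2 * Real.cos (((k:ℝ)+1)*(π - π/n)) * Real.cos_pi_sub (π/n)
  rw [hfun, hfun, hfun]
  push_cast
  rw [show ((k:ℝ) + 2) * (π - π/n) = ((k:ℝ)+1) * (π - π/n) + (π - π/n) by ring,
    show (k:ℝ) * (π - π/n) = ((k:ℝ)+1) * (π - π/n) - (π - π/n) by ring]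
  linear_combination key / (1 + Real.cos (π/(n:ℝ)))
    + 2 * Real.cos (π/(n:ℝ)) * mul_inv_cancel₀ (ne_of_gt h1)

private lemma hfun_wrap (n : ℕ) (hn : 5 ≤ n) (hodd : Odd n) : hfun n (n - 2) = hfun n 2 := by
  obtain ⟨m, hm⟩ := hodd
  rw [hfun, hfun]
  congr 2
  push_cast [Nat.cast_sub (show 2 ≤ n by omega)]
  have hn0 : (n:ℝ) ≠ 0 := by positivity
  have hnm : (n:ℝ) = 2 * m + 1 := by exact_mod_cast hm
  have hexp : ((n:ℝ) - 2) * (π - π / n) = ((m:ℤ)) * (2 * π) - (2 * (π - π / n)) := by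
    push_cast
    have hnn : (n:ℝ) * (π / n) = π := by field_simp
    linear_combination (-1 : ℝ) * hnn + π * hnm
  rw [hexp, Real.cos_int_mul_two_pi_sub]

private lemma cyc_val_ne_zero (n : ℕ) (hp : 0 < n) (a : ℤ) : (cyc n hp a).val ≠ 0 := by
  rw [cyc_val]; omega

private lemma fin_val_ne_zero {n : ℕ} {k : Fin (n+1)} (hk : k ≠ 0) : k.val ≠ 0 := by
  intro h; exact hk (Fin.ext (by simp [h]))

private lemma cyc_ne_shift (n : ℕ) (hp : 0 < n) (b d : ℤ) (hd : 0 < d) (hdn : d < n) :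
    cyc n hp (b + d) ≠ cyc n hp b := by
  intro h
  have h1 : (b + d) % (n:ℤ) = b % (n:ℤ) := cyc_inj n hp h
  have h2 : (n:ℤ) ∣ b - (b + d) := Int.ModEq.dvd h1
  have h3 : (n:ℤ) ∣ d := by
    have : b - (b + d) = -d := by ring
    rw [this] at h2
    exact (dvd_neg).mp h2
  have := Int.le_of_dvd hd h3
  omega

private lemma cst_eq (n : ℕ) (hn : 5 ≤ n) :
    ((n:ℝ) - (n:ℝ) * Real.cos (π / n) / (1 + Real.cos (π / n))) /
      (2 * ((n:ℝ) * Real.cos (π / n) / (1 + Real.cos (π / n)))) = 1 / (2 * Real.cos (π / n)) := by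
  have h1 := one_add_cos_pos n hn
  have h2 := cos_half_lt n hn
  have hC : (0:ℝ) < Real.cos (π / n) := by linarith
  have hn0 : (0:ℝ) < (n:ℝ) := by positivity
  have hd1 : (0:ℝ) < 2 * ((n:ℝ) * Real.cos (π / n) / (1 + Real.cos (π / n))) := by
    apply mul_pos (by norm_num)
    exact div_pos (mul_pos hn0 hC) h1
  rw [div_eq_div_iff (ne_of_gt hd1) (by positivity : (2:ℝ) * Real.cos (π / n) ≠ 0)]
  field_simp
  ring
private lemma cyc_fix_val (n : ℕ) (hp : 0 < n) (k : Fin (n+1)) (hk : k ≠ 0) (b : ℤ)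
    (h : ((k.val : ℤ) + 1) % (n:ℤ) = b % (n:ℤ)) : k = cyc n hp (b - 1) := by
  have h2 : (k.val : ℤ) % (n:ℤ) = (b - 1) % (n:ℤ) := by
    have := Int.ModEq.sub_right 1 h
    simpa [Int.ModEq] using this
  rw [← cyc_fix n hp k hk]
  exact cyc_congr n hp h2

private lemma Z_vanish (n : ℕ) (hn : 5 ≤ n) (hp : 0 < n) (k : Fin (n+1)) (b : ℤ)
    (hk0 : k ≠ 0) (h1 : k ≠ cyc n hp b) (h2 : k ≠ cyc n hp (b-1)) (h3 : k ≠ cyc n hp (b+1)) :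
    kcbsDual n k (cyc n hp b) = 0 := by
  have hkv : k.val ≠ 0 := fin_val_ne_zero hk0
  have hbv : (cyc n hp b).val ≠ 0 := cyc_val_ne_zero n hp b
  have na : (cyc n hp b).val ≠ k.val % n + 1 := by
    intro h
    have e1 : (cyc n hp ((k.val:ℤ) + 1)).val = k.val % n + 1 := by
      rw [cyc_succ_val n hp (by omega) (k.val:ℤ)]
      rw [cyc_fix n hp k hk0]
    have e2 : cyc n hp ((k.val:ℤ) + 1) = cyc n hp b := Fin.ext (e1.trans h.symm)
    exact h2 (cyc_fix_val n hp k hk0 b (cyc_inj n hp e2))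
  have nb : k.val ≠ (cyc n hp b).val % n + 1 := by
    intro h
    have e1 : (cyc n hp (b + 1)).val = (cyc n hp b).val % n + 1 := cyc_succ_val n hp (by omega) b
    exact h3 (Fin.ext (h.trans e1.symm))
  simp [kcbsDual, hkv, hbv, h1, na, nb]

private lemma Z_zero_col (n : ℕ) (j : Fin (n+1)) (hj : j.val ≠ 0) : kcbsDual n 0 j = -1 := by
  simp [kcbsDual, hj]

private lemma Z_diag (n : ℕ) (hp : 0 < n) (b : ℤ) :
    kcbsDual n (cyc n hp b) (cyc n hp b) = 1 := by
  simp [kcbsDual, cyc_val_ne_zero n hp b]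

private lemma Z_sub (n : ℕ) (hn : 5 ≤ n) (hp : 0 < n) (b : ℤ) :
    kcbsDual n (cyc n hp (b-1)) (cyc n hp b) = 1 / (2 * Real.cos (π / n)) := by
  have hne : cyc n hp (b-1) ≠ cyc n hp b := by
    intro h
    have := cyc_ne_shift n hp (b-1) 1 (by norm_num) (by exact_mod_cast by omega)
    rw [show b - 1 + 1 = b by ring] at this
    exact this h.symm
  have hadj : (cyc n hp b).val = (cyc n hp (b-1)).val % n + 1 := by
    have := cyc_succ_val n hp (by omega) (b-1)
    rw [show b - 1 + 1 = b by ring] at this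
    exact this
  rw [← cst_eq n hn]
  simp [kcbsDual, cyc_val_ne_zero n hp, hne, hadj]

private lemma Z_sup (n : ℕ) (hn : 5 ≤ n) (hp : 0 < n) (b : ℤ) :
    kcbsDual n (cyc n hp (b+1)) (cyc n hp b) = 1 / (2 * Real.cos (π / n)) := by
  have hne : cyc n hp (b+1) ≠ cyc n hp b :=
    cyc_ne_shift n hp b 1 (by norm_num) (by exact_mod_cast by omega)
  have hadj : (cyc n hp (b+1)).val = (cyc n hp b).val % n + 1 := cyc_succ_val n hp (by omega) b
  rw [← cst_eq n hn]
  simp only [kcbsDual]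
  rw [if_neg (by simp [cyc_val_ne_zero n hp]), if_neg (by simp [cyc_val_ne_zero n hp]),
    if_neg hne, if_pos (Or.inr hadj)]
private lemma col_eq (n : ℕ) (hn : 5 ≤ n) (hp : 0 < n)
    (M : Matrix (Fin (n+1)) (Fin (n+1)) ℝ) (hMZ : M * kcbsDual n = 0) (i : Fin (n+1)) (b : ℤ) :
    2 * Real.cos (π / n) * M i (cyc n hp b)
      + (M i (cyc n hp (b-1)) + M i (cyc n hp (b+1)))
      = 2 * Real.cos (π / n) * M i 0 := by
  have hC : (0:ℝ) < Real.cos (π / n) := by have := cos_half_lt n hn; linarith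
  have h2C : (2 * Real.cos (π / n) : ℝ) ≠ 0 := by positivity
  have n2 : cyc n hp (b+1) ≠ cyc n hp b :=
    cyc_ne_shift n hp b 1 (by norm_num) (by exact_mod_cast by omega)
  have n1 : cyc n hp (b-1) ≠ cyc n hp b := by
    intro h
    have := cyc_ne_shift n hp (b-1) 1 (by norm_num) (by exact_mod_cast by omega)
    rw [show b - 1 + 1 = b by ring] at this
    exact this h.symm
  have n3 : cyc n hp (b-1) ≠ cyc n hp (b+1) := by
    intro h
    have := cyc_ne_shift n hp (b-1) 2 (by norm_num) (by exact_mod_cast by omega)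
    rw [show b - 1 + 2 = b + 1 by ring] at this
    exact this h.symm
  have hsum : ∑ k, M i k * kcbsDual n k (cyc n hp b) = 0 := by
    have h := congrFun (congrFun hMZ i) (cyc n hp b)
    rwa [Matrix.mul_apply, Matrix.zero_apply] at h
  have hsplit : ∑ k ∈ ({0, cyc n hp (b-1), cyc n hp b, cyc n hp (b+1)} : Finset (Fin (n+1))),
      M i k * kcbsDual n k (cyc n hp b) = ∑ k, M i k * kcbsDual n k (cyc n hp b) := by
    apply Finset.sum_subset (Finset.subset_univ _)
    intro k _ hk
    simp only [Finset.mem_insert, Finset.mem_singleton, not_or] at hk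
    obtain ⟨hk0, hk1, hk2, hk3⟩ := hk
    rw [Z_vanish n hn hp k b hk0 hk2 hk1 hk3, mul_zero]
  rw [← hsplit] at hsum
  have m1 : (0 : Fin (n+1)) ∉ ({cyc n hp (b-1), cyc n hp b, cyc n hp (b+1)} : Finset (Fin (n+1))) := by
    simp only [Finset.mem_insert, Finset.mem_singleton, not_or]
    exact ⟨(cyc_ne_zero n hp _).symm, (cyc_ne_zero n hp _).symm, (cyc_ne_zero n hp _).symm⟩
  have m2 : cyc n hp (b-1) ∉ ({cyc n hp b, cyc n hp (b+1)} : Finset (Fin (n+1))) := by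
    simp only [Finset.mem_insert, Finset.mem_singleton, not_or]
    exact ⟨n1, n3⟩
  have m3 : cyc n hp b ∉ ({cyc n hp (b+1)} : Finset (Fin (n+1))) :=
    Finset.notMem_singleton.mpr n2.symm
  rw [Finset.sum_insert m1, Finset.sum_insert m2, Finset.sum_insert m3,
    Finset.sum_singleton, Z_zero_col n _ (cyc_val_ne_zero n hp b), Z_sub n hn hp b,
    Z_diag n hp b, Z_sup n hn hp b] at hsum
  linear_combination (2 * Real.cos (π / n)) * hsum
    - (M i (cyc n hp (b-1)) + M i (cyc n hp (b+1))) * mul_inv_cancel₀ h2C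
/-- For odd `n ≥ 5`, the only symmetric matrix `M` with `M₀₀ = 0`,
`M_{0i} = M_{ii}`, `M_{i,i+1 mod n} = 0` (on the cycle `{1,…,n}`) and `M Z_n = 0`
is `M = 0`; i.e. `Z_n` is dual nondegenerate. -/
theorem kcbsDual_nondegenerate (n : ℕ) (hn : 5 ≤ n) (hodd : Odd n)
    (M : Matrix (Fin (n + 1)) (Fin (n + 1)) ℝ) (hsymm : M.IsSymm)
    (h00 : M 0 0 = 0)
    (hdiag : ∀ i : Fin (n + 1), i ≠ 0 → M 0 i = M i i)
    (hadj : ∀ i j : Fin (n + 1), i.val ≠ 0 → j.val = i.val % n + 1 → M i j = 0)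
    (hMZ : M * kcbsDual n = 0) :
    M = 0 := by
  have hp : 0 < n := by omega
  have hC2 := cos_half_lt n hn
  have hC : (0:ℝ) < Real.cos (π / n) := by linarith
  have row : ∀ (b : ℤ) (k : ℕ),
      M (cyc n hp b) (cyc n hp (b + (k:ℤ))) = M (cyc n hp b) (cyc n hp b) * hfun n k := by
    intro b k
    induction k using Nat.twoStepInduction with
    | zero =>
      rw [hfun_zero n hn, Nat.cast_zero, add_zero, mul_one]
    | one =>
      rw [hfun_one n, mul_zero, Nat.cast_one]
      exact hadj (cyc n hp b) _ (cyc_val_ne_zero n hp b) (cyc_succ_val n hp (by omega) b)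
    | more k ih ih1 =>
      have hcol := col_eq n hn hp M hMZ (cyc n hp b) (b + (k:ℤ) + 1)
      rw [show b + (k:ℤ) + 1 - 1 = b + (k:ℤ) from by ring,
          show b + (k:ℤ) + 1 + 1 = b + ((k:ℤ) + 2) from by ring] at hcol
      rw [show ((k+1:ℕ):ℤ) = (k:ℤ) + 1 from by push_cast; ring,
          show b + ((k:ℤ) + 1) = b + (k:ℤ) + 1 from by ring] at ih1
      rw [show ((k+2:ℕ):ℤ) = (k:ℤ) + 2 from by push_cast; ring]
      rw [ih, ih1] at hcol
      have h0 : M (cyc n hp b) 0 = M (cyc n hp b) (cyc n hp b) := by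
        rw [hsymm.apply 0 (cyc n hp b)]
        exact hdiag (cyc n hp b) (cyc_ne_zero n hp b)
      rw [h0] at hcol
      rw [hfun_rec n hn k]
      linear_combination hcol
  have mu2 : ∀ b : ℤ, M (cyc n hp (b+2)) (cyc n hp (b+2)) = M (cyc n hp b) (cyc n hp b) := by
    intro b
    have r1 := row b 2
    rw [show ((2:ℕ):ℤ) = 2 from by norm_num] at r1
    have r2 := row (b+2) (n-2)
    rw [show ((n-2:ℕ):ℤ) = (n:ℤ) - 2 from by omega,
        show b + 2 + ((n:ℤ) - 2) = b + (n:ℤ) from by ring, cyc_add_n n hp b] at r2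
    rw [hfun_wrap n hn hodd, hfun_two n hn] at r2
    rw [hfun_two n hn] at r1
    have hsym2 : M (cyc n hp (b+2)) (cyc n hp b) = M (cyc n hp b) (cyc n hp (b+2)) :=
      hsymm.apply _ _
    have h2ne : (2 * Real.cos (π / n) - 1 : ℝ) ≠ 0 := by linarith
    apply mul_right_cancel₀ h2ne
    rw [← r2, hsym2, r1]
  have step2 : ∀ (t : ℕ) (b : ℤ),
      M (cyc n hp (b + 2*(t:ℤ))) (cyc n hp (b + 2*(t:ℤ))) = M (cyc n hp b) (cyc n hp b) := by
    intro t
    induction t with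
    | zero => intro b; norm_num
    | succ t ih =>
      intro b
      have h1 := ih (b + 2)
      rw [show b + 2 + 2*(t:ℤ) = b + 2*((t:ℤ)+1) from by ring] at h1
      rw [show ((t+1:ℕ):ℤ) = (t:ℤ)+1 from by push_cast; ring, h1]
      exact mu2 b
  have mu1 : ∀ b : ℤ, M (cyc n hp (b+1)) (cyc n hp (b+1)) = M (cyc n hp b) (cyc n hp b) := by
    intro b
    obtain ⟨m, hm⟩ := hodd
    have h1 := step2 (m+1) b
    rw [show b + 2*((m+1:ℕ):ℤ) = b + 1 + (n:ℤ) from by push_cast [hm]; ring,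
        cyc_add_n n hp (b+1)] at h1
    exact h1
  have muz : ∀ b : ℤ, M (cyc n hp b) (cyc n hp b) = 0 := by
    intro b
    have hcol := col_eq n hn hp M hMZ 0 b
    have d0 : M 0 (cyc n hp b) = M (cyc n hp b) (cyc n hp b) := hdiag _ (cyc_ne_zero n hp b)
    have dm : M 0 (cyc n hp (b-1)) = M (cyc n hp b) (cyc n hp b) := by
      rw [hdiag _ (cyc_ne_zero n hp (b-1))]
      have h1 := mu1 (b-1)
      rw [show b - 1 + 1 = b from by ring] at h1
      exact h1.symm
    have dp : M 0 (cyc n hp (b+1)) = M (cyc n hp b) (cyc n hp b) := by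
      rw [hdiag _ (cyc_ne_zero n hp (b+1))]
      exact mu1 b
    rw [d0, dm, dp, h00, mul_zero] at hcol
    have hfac : M (cyc n hp b) (cyc n hp b) * (2*Real.cos (π/n) + 2) = 0 := by
      linear_combination hcol
    rcases mul_eq_zero.mp hfac with h | h
    · exact h
    · linarith
  ext i j
  rw [Matrix.zero_apply]
  by_cases hi : i = 0
  · subst hi
    by_cases hj : j = 0
    · subst hj; exact h00
    · rw [hdiag j hj]
      have h1 := muz (j.val)
      rwa [cyc_fix n hp j hj] at h1
  · by_cases hj : j = 0
    · subst hj
      rw [hsymm.apply 0 i, hdiag i hi]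
      have h1 := muz (i.val)
      rwa [cyc_fix n hp i hi] at h1
    · have hiv : i.val ≠ 0 := fin_val_ne_zero hi
      have hjv : j.val ≠ 0 := fin_val_ne_zero hj
      have hin : i.val ≤ n := by omega
      have hNat : (i.val + (j.val + n - i.val) % n) % n = j.val % n := by
        calc (i.val + (j.val + n - i.val) % n) % n
            = (i.val + (j.val + n - i.val)) % n :=
              Nat.ModEq.add_left _ (Nat.mod_mod_of_dvd _ dvd_rfl)
          _ = (j.val + n) % n := by rw [show i.val + (j.val + n - i.val) = j.val + n from by omega]
          _ = j.val % n := Nat.add_mod_right _ _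
      have hIZ : ((i.val + (j.val + n - i.val) % n : ℕ) : ℤ) % (n:ℤ)
          = ((j.val : ℕ) : ℤ) % (n:ℤ) := by
        have h1 := congrArg (fun x : ℕ => (x : ℤ)) hNat
        push_cast at h1
        exact_mod_cast h1
      have hjcyc : cyc n hp ((i.val:ℤ) + (((j.val + n - i.val) % n : ℕ) : ℤ)) = j := by
        rw [show (i.val:ℤ) + (((j.val + n - i.val) % n : ℕ):ℤ)
            = ((i.val + (j.val + n - i.val) % n : ℕ):ℤ) from by push_cast; ring]
        rw [cyc_congr n hp hIZ]
        exact cyc_fix n hp j hj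
      have h1 := row (i.val:ℤ) ((j.val + n - i.val) % n)
      rw [hjcyc, cyc_fix n hp i hi] at h1
      have h2 := muz (i.val:ℤ)
      rw [cyc_fix n hp i hi] at h2
      rw [h1, h2, zero_mul]
end

section
/- For any odd integer n ≥ 3, define |u₀⟩ = (1,0,0)ᵀ and |u_j⟩ = (cos θ, sin θ sin φ_j, sin θ cos φ_j)ᵀ for 1 ≤ j ≤ n, where cos²θ = cos(π/n)/(1+cos(π/n)) and φ_j = jπ(n−1)/n. Then ⟨u_j | u_{j+1 mod n}⟩ = 0 for all 1 ≤ j ≤ n (cyclically), i.e., consecutive vectors are orthogonal. -/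
open Real

/-- The canonical KCBS vectors in `ℝ³`: `u 0 = (1,0,0)` and
`u j = (cos θ, sin θ sin φ_j, sin θ cos φ_j)` with `φ_j = jπ(n−1)/n`. -/
noncomputable def kcbsVec (n : ℕ) (θ : ℝ) (j : ℕ) : Fin 3 → ℝ :=
  if j = 0 then ![1, 0, 0]
  else ![Real.cos θ, Real.sin θ * Real.sin (j * π * (n - 1) / n),
         Real.sin θ * Real.cos (j * π * (n - 1) / n)]

/-- For odd `n ≥ 3` and `θ` with `cos²θ = cos(π/n)/(1+cos(π/n))`,
cyclically consecutive KCBS vectors are orthogonal: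
`⟨u_j, u_{j+1 mod n}⟩ = 0` for all `1 ≤ j ≤ n`. -/
theorem kcbsVec_consecutive_orthogonal (n : ℕ) (hn : 3 ≤ n) (hodd : Odd n) (θ : ℝ)
    (hθ : Real.cos θ ^ 2 = Real.cos (π / n) / (1 + Real.cos (π / n))) :
    ∀ j : ℕ, 1 ≤ j → j ≤ n →
      ∑ k : Fin 3, kcbsVec n θ j k * kcbsVec n θ (j % n + 1) k = 0 := by
  intro j hj1 hjn
  have hn0 : (n : ℝ) ≠ 0 := Nat.cast_ne_zero.mpr (by omega)
  have hnpos : (0 : ℝ) < n := by positivity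
  have hcpos : 0 < Real.cos (π / n) := by
    apply Real.cos_pos_of_mem_Ioo
    constructor
    · have : 0 < π / n := by positivity
      linarith [Real.pi_pos]
    · have h3 : (3 : ℝ) ≤ n := by exact_mod_cast hn
      have : π / n ≤ π / 3 := by
        apply div_le_div_of_nonneg_left Real.pi_pos.le (by norm_num) h3
      linarith [Real.pi_pos]
  have hc1 : 1 + Real.cos (π / n) ≠ 0 := by positivity
  have key : Real.cos θ ^ 2 - Real.sin θ ^ 2 * Real.cos (π / n) = 0 := by
    have hs : Real.sin θ ^ 2 = 1 - Real.cos θ ^ 2 := by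
      have := Real.sin_sq_add_cos_sq θ; linarith
    rw [hs, hθ]; field_simp; ring
  have hphase : Real.cos (π * ((n : ℝ) - 1) / n) = - Real.cos (π / n) := by
    have h : π * ((n : ℝ) - 1) / n = π - π / n := by field_simp
    rw [h, Real.cos_pi_sub]
  rcases lt_or_eq_of_le hjn with hlt | heq
  · -- j < n, so j % n = j and the next index is j + 1
    have hmod : j % n = j := Nat.mod_eq_of_lt hlt
    rw [hmod]
    have hj0 : j ≠ 0 := by omega
    have hj10 : j + 1 ≠ 0 := by omega
    simp only [kcbsVec, if_neg hj0, if_neg hj10, Fin.sum_univ_three,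
      Matrix.cons_val_zero, Matrix.cons_val_one, Matrix.head_cons,
      Matrix.cons_val_two, Matrix.tail_cons]
    push_cast
    set a := (j : ℝ) * π * ((n : ℝ) - 1) / n with ha
    have hb : ((j : ℝ) + 1) * π * ((n : ℝ) - 1) / n = a + π * ((n : ℝ) - 1) / n := by
      rw [ha]; ring
    rw [hb]
    have fact1 : Real.cos (a + π * ((n : ℝ) - 1) / n) * Real.cos a
        + Real.sin (a + π * ((n : ℝ) - 1) / n) * Real.sin a
        = - Real.cos (π / n) := by
      rw [← Real.cos_sub, show a + π * ((n : ℝ) - 1) / n - a = π * ((n : ℝ) - 1) / n by ring,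
        hphase]
    linear_combination key + Real.sin θ ^ 2 * fact1
  · -- j = n, so j % n = 0 and the next index is 1
    subst heq
    rw [Nat.mod_self, Nat.zero_add]
    have hj0 : j ≠ 0 := by omega
    simp only [kcbsVec, if_neg hj0, if_neg (one_ne_zero), Fin.sum_univ_three,
      Matrix.cons_val_zero, Matrix.cons_val_one, Matrix.head_cons,
      Matrix.cons_val_two, Matrix.tail_cons]
    obtain ⟨m, hm⟩ := hodd
    have hphi : (j : ℝ) * π * ((j : ℝ) - 1) / j = (m : ℝ) * (2 * π) := by
      have : ((j : ℝ) - 1) = 2 * m := by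
        have : (j : ℝ) = 2 * m + 1 := by exact_mod_cast hm
        linarith
      rw [this]; field_simp
    have hs0 : Real.sin ((j : ℝ) * π * ((j : ℝ) - 1) / j) = 0 := by
      rw [hphi, show (m : ℝ) * (2 * π) = (2 * m : ℕ) * π by push_cast; ring,
        Real.sin_nat_mul_pi]
    have hc0 : Real.cos ((j : ℝ) * π * ((j : ℝ) - 1) / j) = 1 := by
      rw [hphi, Real.cos_nat_mul_two_pi]
    rw [hs0, hc0]
    have hc1' : Real.cos ((1 : ℕ) * π * ((j : ℝ) - 1) / j) = - Real.cos (π / j) := by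
      rw [show ((1 : ℕ) : ℝ) * π * ((j : ℝ) - 1) / j = π * ((j : ℝ) - 1) / j by push_cast; ring,
        hphase]
    rw [hc1']
    linear_combination key
end

section
/- Let u₀, u₁, …, u_n be the canonical KCBS vectors in ℝ³ for odd n ≥ 3 (u₀ = (1,0,0), u_j = (cos θ, sin θ sin φ_j, sin θ cos φ_j) with cos²θ = cos(π/n)/(1+cos(π/n)), φ_j = jπ(n−1)/n). Then the Gram matrix X* of the vectors u₀, ⟨u₀|u₁⟩u₁, …, ⟨u₀|u_n⟩u_n is a feasible solution of the Lovász theta SDP for C_n (X*₀₀ = 1, X*_{ii} = X*_{0i} for all i, X*_{i,i+1 mod n} = 0) with objective value ∑_{i=1}^n X*_{ii} = n cos(π/n)/(1+cos(π/n)). -/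
open Real
open Matrix

/-- Dot product on `ℝ³`. -/
noncomputable def dot3 (a b : Fin 3 → ℝ) : ℝ := ∑ k, a k * b k

/-- The rescaled vectors `v₀ = u₀`, `v_i = ⟨u₀|u_i⟩ u_i`. -/
noncomputable def kcbsGramVec (n : ℕ) (θ : ℝ) (i : Fin (n + 1)) : Fin 3 → ℝ :=
  if i.val = 0 then kcbsVec n θ 0
  else dot3 (kcbsVec n θ 0) (kcbsVec n θ i.val) • kcbsVec n θ i.val

/-- The Gram matrix `X*` of the vectors `v₀, v₁, …, v_n`. -/
noncomputable def kcbsGram (n : ℕ) (θ : ℝ) : Matrix (Fin (n + 1)) (Fin (n + 1)) ℝ :=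
  fun i j => dot3 (kcbsGramVec n θ i) (kcbsGramVec n θ j)

/- ### Auxiliary lemmas -/

lemma kcbs_dot3_smul (a b : ℝ) (v w : Fin 3 → ℝ) :
    dot3 (a • v) (b • w) = a * b * dot3 v w := by
  simp only [dot3, Pi.smul_apply, smul_eq_mul, Finset.mul_sum]
  exact Finset.sum_congr rfl fun k _ => by ring

lemma kcbs_dot3_smul_right (a : ℝ) (v w : Fin 3 → ℝ) :
    dot3 v (a • w) = a * dot3 v w := by
  simpa using kcbs_dot3_smul 1 a v w

lemma kcbs_dot3_u0_u0 (n : ℕ) (θ : ℝ) :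
    dot3 (kcbsVec n θ 0) (kcbsVec n θ 0) = 1 := by
  simp [dot3, kcbsVec, Fin.sum_univ_three]

lemma kcbs_dot3_u0_u (n : ℕ) (θ : ℝ) (j : ℕ) (hj : j ≠ 0) :
    dot3 (kcbsVec n θ 0) (kcbsVec n θ j) = Real.cos θ := by
  simp [dot3, kcbsVec, hj, Fin.sum_univ_three]

lemma kcbs_dot3_u_u (n : ℕ) (θ : ℝ) (j : ℕ) (hj : j ≠ 0) :
    dot3 (kcbsVec n θ j) (kcbsVec n θ j) = 1 := by
  simp [dot3, kcbsVec, hj, Fin.sum_univ_three]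
  nlinarith [Real.sin_sq_add_cos_sq θ, Real.sin_sq_add_cos_sq (j * π * (n - 1) / n)]

lemma kcbs_dot3_ui_uj (n : ℕ) (θ : ℝ) (i j : ℕ) (hi : i ≠ 0) (hj : j ≠ 0) :
    dot3 (kcbsVec n θ i) (kcbsVec n θ j)
      = Real.cos θ ^ 2 + Real.sin θ ^ 2 *
        Real.cos (i * π * (n - 1) / n - j * π * (n - 1) / n) := by
  simp [dot3, kcbsVec, hi, hj, Fin.sum_univ_three, Real.cos_sub]
  ring

lemma kcbs_cos_adj (n : ℕ) (hn : 3 ≤ n) (i : ℕ) :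
    Real.cos ((i : ℝ) * π * (n - 1) / n - ((i + 1 : ℕ) : ℝ) * π * (n - 1) / n)
      = -Real.cos (π / n) := by
  have hn0 : (n : ℝ) ≠ 0 := by positivity
  have : (i : ℝ) * π * (n - 1) / n - ((i + 1 : ℕ) : ℝ) * π * (n - 1) / n
      = -(π - π / n) := by
    push_cast
    field_simp
    ring
  rw [this, Real.cos_neg, Real.cos_pi_sub]

lemma kcbs_cos_wrap (n : ℕ) (hn : 3 ≤ n) (hodd : Odd n) :
    Real.cos ((n : ℝ) * π * (n - 1) / n - (1 : ℝ) * π * (n - 1) / n)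
      = -Real.cos (π / n) := by
  obtain ⟨m, hm⟩ := hodd
  have hm1 : 1 ≤ m := by omega
  have hn0 : (n : ℝ) ≠ 0 := by positivity
  have : (n : ℝ) * π * (n - 1) / n - (1 : ℝ) * π * (n - 1) / n
      = (π / n + π) + (((m : ℤ) - 1 : ℤ) : ℝ) * (2 * π) := by
    subst hm
    push_cast
    field_simp
    ring
  rw [this, Real.cos_add_int_mul_two_pi, Real.cos_add_pi]

/-- For odd `n ≥ 3` and `θ` with `cos²θ = cos(π/n)/(1+cos(π/n))`, the
Gram matrix `X*` of `u₀, ⟨u₀|u₁⟩u₁, …, ⟨u₀|u_n⟩u_n` is a feasible solution of the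
Lovász theta SDP for `C_n` with objective value `n cos(π/n)/(1+cos(π/n))`. -/
theorem kcbsGram_feasible_optimal (n : ℕ) (hn : 3 ≤ n) (hodd : Odd n) (θ : ℝ)
    (hθ : Real.cos θ ^ 2 = Real.cos (π / n) / (1 + Real.cos (π / n))) :
    (kcbsGram n θ).PosSemidef ∧
      kcbsGram n θ 0 0 = 1 ∧
      (∀ i : Fin (n + 1), i ≠ 0 → kcbsGram n θ i i = kcbsGram n θ 0 i) ∧
      (∀ i j : Fin (n + 1), i.val ≠ 0 → j.val = i.val % n + 1 → kcbsGram n θ i j = 0) ∧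
      ∑ i ∈ Finset.univ.erase (0 : Fin (n + 1)), kcbsGram n θ i i
        = n * Real.cos (π / n) / (1 + Real.cos (π / n)) := by
  have hnR : (1 : ℝ) ≤ (n : ℝ) := by exact_mod_cast le_trans (by norm_num) hn
  have hcpos : 0 < Real.cos (π / n) := by
    apply Real.cos_pos_of_mem_Ioo
    constructor
    · have : 0 < π / n := by positivity
      linarith [Real.pi_pos]
    · calc π / n ≤ π / 3 := by
            apply div_le_div_of_nonneg_left Real.pi_pos.le (by norm_num)
            exact_mod_cast hn
        _ < π / 2 := by
            apply div_lt_div_of_pos_left Real.pi_pos (by norm_num) (by norm_num)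
  have h1c : (0 : ℝ) < 1 + Real.cos (π / n) := by linarith
  have key : Real.cos θ ^ 2 * (1 + Real.cos (π / n)) = Real.cos (π / n) := by
    rw [hθ]; field_simp
  -- diagonal entries
  have hdiag : ∀ i : Fin (n + 1), i.val ≠ 0 → kcbsGram n θ i i = Real.cos θ ^ 2 := by
    intro i hi
    simp only [kcbsGram, kcbsGramVec, hi, if_neg, ite_false]
    rw [kcbs_dot3_smul, kcbs_dot3_u0_u n θ _ hi, kcbs_dot3_u_u n θ _ hi]
    ring
  -- first row entries
  have hrow : ∀ i : Fin (n + 1), i.val ≠ 0 → kcbsGram n θ 0 i = Real.cos θ ^ 2 := by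
    intro i hi
    simp only [kcbsGram, kcbsGramVec, hi, Fin.val_zero, if_pos, ite_true, if_neg, ite_false]
    rw [kcbs_dot3_smul_right, kcbs_dot3_u0_u n θ _ hi]
    ring
  refine ⟨?_, ?_, ?_, ?_, ?_⟩
  · -- PSD
    have hEq : kcbsGram n θ =
        (Matrix.of fun i k => kcbsGramVec n θ i k) *
        (Matrix.of fun i k => kcbsGramVec n θ i k)ᴴ := by
      ext i j
      simp [kcbsGram, dot3, Matrix.mul_apply, Matrix.conjTranspose_apply]
    rw [hEq]
    exact Matrix.posSemidef_self_mul_conjTranspose _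
  · simp only [kcbsGram, kcbsGramVec, Fin.val_zero, if_pos, ite_true]
    exact kcbs_dot3_u0_u0 n θ
  · intro i hi
    have hi' : i.val ≠ 0 := fun h => hi (Fin.ext h)
    rw [hdiag i hi', hrow i hi']
  · intro i j hi hj
    have hj' : j.val ≠ 0 := by omega
    simp only [kcbsGram, kcbsGramVec, hi, hj', if_neg, ite_false]
    rw [kcbs_dot3_smul, kcbs_dot3_u0_u n θ _ hi, kcbs_dot3_u0_u n θ _ hj',
      kcbs_dot3_ui_uj n θ _ _ hi hj']
    have hcosd : Real.cos ((i.val : ℝ) * π * (n - 1) / n - (j.val : ℝ) * π * (n - 1) / n)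
        = -Real.cos (π / n) := by
      rcases lt_or_eq_of_le (Nat.lt_succ_iff.mp i.isLt) with hlt | heq
      · have hmod := Nat.mod_eq_of_lt hlt
        have : j.val = i.val + 1 := by omega
        rw [this]
        exact_mod_cast kcbs_cos_adj n hn i.val
      · have hmod : i.val % n = 0 := by rw [heq]; exact Nat.mod_self n
        have hj1 : j.val = 1 := by omega
        rw [heq, hj1]
        exact_mod_cast kcbs_cos_wrap n hn hodd
    rw [hcosd]
    have hsin : Real.sin θ ^ 2 = 1 - Real.cos θ ^ 2 := by
      nlinarith [Real.sin_sq_add_cos_sq θ]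
    rw [hsin]
    nlinarith [key]
  · have : ∀ i ∈ Finset.univ.erase (0 : Fin (n + 1)),
        kcbsGram n θ i i = Real.cos θ ^ 2 := by
      intro i hi
      exact hdiag i fun h => (Finset.mem_erase.mp hi).1 (Fin.ext h)
    rw [Finset.sum_congr rfl this, Finset.sum_const,
      Finset.card_erase_of_mem (Finset.mem_univ _), Finset.card_univ, Fintype.card_fin]
    simp only [Nat.add_sub_cancel, nsmul_eq_mul]
    rw [hθ, mul_div_assoc]
end
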